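/- arXiv:1003.3075 — 3 statements merged into one kernel-verified Lean document; each statement's English description precedes it below -/
import Mathlib

section
/- For all positive integers p and s, the number of non-crossing partitions of {1,...,sp} in which every block has size divisible by s equals the Fuss-Catalan number FC^(s)_p = (1/(sp+1)) * binomial(sp+p, p). -/
open Equiv Finset MeasureTheory

/-- A finpartition of `Fin n` is non-crossing if there are no `a < b < c < d` with
`a, c` in one block and `b, d` in another, distinct block. -/
def IsNonCrossing {n : ℕ} (P : Finpartition (Finset.univ : Finset (Fin n))) : Prop :=
  ¬ ∃ (a b c d : Fin n) (X Y : Finset (Fin n)), X ∈ P.parts ∧ Y ∈ P.parts ∧ X ≠ Y ∧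
      a < b ∧ b < c ∧ c < d ∧ a ∈ X ∧ c ∈ X ∧ b ∈ Y ∧ d ∈ Y

/-- The minimal number of transpositions whose product is `σ`. -/
noncomputable def permLength {n : ℕ} (σ : Equiv.Perm (Fin n)) : ℕ :=
  sInf {k | ∃ l : List (Equiv.Perm (Fin n)), (∀ τ ∈ l, τ.IsSwap) ∧ l.prod = σ ∧ l.length = k}

/-- The number of cycles of `σ`, counting fixed points as cycles (= number of orbits). -/
def cycleCount {n : ℕ} (σ : Equiv.Perm (Fin n)) : ℕ :=
  Multiset.card σ.cycleType + (n - σ.support.card)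

namespace FussCat

open Fin.NatCast

variable (s p : ℕ)

/-- periodic extension of `m` -/
def mm (m : Fin (s*p+1) → ℕ) (t : ℕ) : ℕ := m t

/-- height after `k` steps -/
def G (m : Fin (s*p+1) → ℕ) (k : ℕ) : ℤ := s * (∑ t ∈ Finset.range k, mm s p m t) - k

def Good (m : Fin (s*p+1) → ℕ) : Prop := ∀ k ≤ s*p, 0 ≤ G s p m k

/-- rotation of the sequence -/
def rot (r : ℕ) (m : Fin (s*p+1) → ℕ) : Fin (s*p+1) → ℕ := fun i => mm s p m ((i : ℕ) + r)

variable {s p}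

lemma natCast_fin_eq {a b : ℕ} (h : a % (s*p+1) = b % (s*p+1)) :
    (a : Fin (s*p+1)) = (b : Fin (s*p+1)) := by
  apply Fin.ext
  simp [Fin.val_natCast, h]

lemma mm_mod (m : Fin (s*p+1) → ℕ) (t : ℕ) : mm s p m (t % (s*p+1)) = mm s p m t := by
  unfold mm
  exact congrArg m (natCast_fin_eq (Nat.mod_mod_of_dvd t dvd_rfl))

lemma mm_add_period (m : Fin (s*p+1) → ℕ) (t : ℕ) : mm s p m (t + (s*p+1)) = mm s p m t := by
  unfold mm
  exact congrArg m (natCast_fin_eq (Nat.add_mod_right t _))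

lemma G_zero (m : Fin (s*p+1) → ℕ) : G s p m 0 = 0 := by simp [G]

lemma G_succ (m : Fin (s*p+1) → ℕ) (k : ℕ) :
    G s p m (k+1) = G s p m k + s * mm s p m k - 1 := by
  simp [G, Finset.sum_range_succ]
  push_cast
  ring

lemma sum_range_mm (m : Fin (s*p+1) → ℕ) :
    ∑ t ∈ Finset.range (s*p+1), mm s p m t = ∑ i, m i := by
  rw [← Fin.sum_univ_eq_sum_range (fun t => mm s p m t)]
  simp only [mm, Fin.cast_val_eq_self]

lemma sum_mm (m : Fin (s*p+1) → ℕ) (hm : ∑ i, m i = p) :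
    ∑ t ∈ Finset.range (s*p+1), mm s p m t = p := by
  rw [sum_range_mm]; exact hm

lemma G_period (m : Fin (s*p+1) → ℕ) (hm : ∑ i, m i = p) (k : ℕ) :
    G s p m (k + (s*p+1)) = G s p m k - 1 := by
  induction k with
  | zero =>
    rw [Nat.zero_add, G_zero]
    unfold G
    rw [sum_mm m hm]
    push_cast
    ring
  | succ k ih =>
    have : k + 1 + (s*p+1) = (k + (s*p+1)) + 1 := by ring
    rw [this, G_succ, G_succ, ih, mm_add_period]
    ring

lemma mm_congr (m : Fin (s*p+1) → ℕ) {a b : ℕ} (h : a % (s*p+1) = b % (s*p+1)) :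
    mm s p m a = mm s p m b := by
  unfold mm
  exact congrArg m (natCast_fin_eq h)

lemma mm_rot (r : ℕ) (m : Fin (s*p+1) → ℕ) (t : ℕ) :
    mm s p (rot s p r m) t = mm s p m (t + r) := by
  show mm s p m (((t : Fin (s*p+1)) : ℕ) + r) = mm s p m (t + r)
  rw [Fin.val_natCast]
  exact mm_congr m (by rw [Nat.add_mod, Nat.mod_mod_of_dvd _ dvd_rfl, ← Nat.add_mod])

lemma sum_Ico_mm (m : Fin (s*p+1) → ℕ) (hm : ∑ i, m i = p) (r : ℕ) :
    ∑ t ∈ Finset.Ico r (r + (s*p+1)), mm s p m t = p := by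
  induction r with
  | zero => simpa using sum_mm m hm
  | succ r ih =>
    have h1 : r + 1 + (s*p+1) = (r + (s*p+1)) + 1 := by ring
    have h2 : r < r + (s*p+1) := by omega
    rw [h1, Finset.sum_Ico_succ_top (by omega)]
    rw [Finset.sum_eq_sum_Ico_succ_bot h2] at ih
    have h3 : mm s p m (r + (s*p+1)) = mm s p m r := mm_add_period m r
    omega

lemma sum_rot (r : ℕ) (m : Fin (s*p+1) → ℕ) (hm : ∑ i, m i = p) :
    ∑ i, rot s p r m i = p := by
  have : ∑ i, rot s p r m i = ∑ t ∈ Finset.range (s*p+1), mm s p m (t + r) := by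
    rw [← Fin.sum_univ_eq_sum_range (fun t => mm s p m (t + r))]
    rfl
  rw [this]
  have := sum_Ico_mm m hm r
  rw [Finset.sum_Ico_eq_sum_range] at this
  simpa [add_comm, Nat.add_sub_cancel_left] using this

lemma G_rot (r : ℕ) (m : Fin (s*p+1) → ℕ) (k : ℕ) :
    G s p (rot s p r m) k = G s p m (k + r) - G s p m r := by
  induction k with
  | zero => simp [G_zero]
  | succ k ih =>
    rw [G_succ, ih, mm_rot]
    have : k + 1 + r = (k + r) + 1 := by ring
    rw [this, G_succ]
    ring

lemma rot_rot (a b : ℕ) (m : Fin (s*p+1) → ℕ) :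
    rot s p a (rot s p b m) = rot s p (a + b) m := by
  funext i
  show mm s p (rot s p b m) ((i:ℕ) + a) = mm s p m ((i:ℕ) + (a + b))
  rw [mm_rot]
  exact congrArg (mm s p m) (by ring)

lemma rot_zero (m : Fin (s*p+1) → ℕ) : rot s p 0 m = m := by
  funext i
  show mm s p m ((i:ℕ) + 0) = m i
  rw [Nat.add_zero]
  unfold mm
  rw [Fin.cast_val_eq_self]

lemma rot_period (m : Fin (s*p+1) → ℕ) : rot s p (s*p+1) m = m := by
  funext i
  show mm s p m ((i:ℕ) + (s*p+1)) = m i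
  rw [mm_add_period]
  unfold mm
  rw [Fin.cast_val_eq_self]

/-- The cycle lemma: there is exactly one good rotation. -/
theorem existsUnique_good_rot (m : Fin (s*p+1) → ℕ) (hm : ∑ i, m i = p) :
    ∃ r, r < s*p+1 ∧ Good s p (rot s p r m) ∧
      ∀ r', r' < s*p+1 → Good s p (rot s p r' m) → r' = r := by
  -- two good rotations are impossible
  have key : ∀ a b, a < b → b < s*p+1 → Good s p (rot s p a m) → Good s p (rot s p b m) →
      False := by
    intro a b hab hbN hga hgb
    have h1 : (0:ℤ) ≤ G s p m b - G s p m a := by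
      have := hga (b - a) (by omega)
      rwa [G_rot, Nat.sub_add_cancel (le_of_lt hab)] at this
    have h2 : (0:ℤ) ≤ G s p m a - 1 - G s p m b := by
      have := hgb (a + (s*p+1) - b) (by omega)
      rw [G_rot] at this
      have he : a + (s*p+1) - b + b = a + (s*p+1) := by omega
      rwa [he, G_period m hm a] at this
    omega
  -- least argmin of G over range (s*p+1)
  obtain ⟨k, hk, hkmin⟩ :=
    Finset.exists_min_image (Finset.range (s*p+1)) (G s p m) ⟨0, by simp⟩
  set A := (Finset.range (s*p+1)).filter (fun j => G s p m j = G s p m k) with hA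
  have hAne : A.Nonempty := ⟨k, by simp only [hA, Finset.mem_filter]; exact ⟨hk, trivial⟩⟩
  set r := A.min' hAne with hr
  have hrA : r ∈ A := A.min'_mem hAne
  rw [hA, Finset.mem_filter, Finset.mem_range] at hrA
  obtain ⟨hrN, hreq⟩ := hrA
  have hrmin : ∀ i ∈ Finset.range (s*p+1), G s p m r ≤ G s p m i := by
    intro i hi
    rw [hreq]
    exact hkmin i hi
  have hstrict : ∀ j, j < r → G s p m r < G s p m j := by
    intro j hj
    have hjN : j < s*p+1 := lt_trans hj hrN
    have hge := hkmin j (Finset.mem_range.mpr hjN)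
    rcases eq_or_lt_of_le hge with heq | hlt
    · exfalso
      have hjA : j ∈ A := by
        rw [hA, Finset.mem_filter, Finset.mem_range]
        exact ⟨hjN, heq.symm⟩
      have := A.min'_le j hjA
      omega
    · omega
  have hgood : Good s p (rot s p r m) := by
    intro k hk
    rw [G_rot]
    rcases lt_or_ge (k + r) (s*p+1) with hlt | hge
    · have := hrmin (k + r) (Finset.mem_range.mpr hlt)
      omega
    · have hj : k + r - (s*p+1) < r := by omega
      have : G s p m ((k + r - (s*p+1)) + (s*p+1)) = G s p m (k + r - (s*p+1)) - 1 :=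
        G_period m hm _
      rw [show (k + r - (s*p+1)) + (s*p+1) = k + r by omega] at this
      have := hstrict _ hj
      omega
  refine ⟨r, hrN, hgood, fun r' hr'N hg' => ?_⟩
  by_contra hne
  rcases lt_or_gt_of_ne hne with h | h
  · exact key r' r h hrN hg' hgood
  · exact key r r' h hr'N hgood hg'

lemma rot_mod (r : ℕ) (m : Fin (s*p+1) → ℕ) : rot s p (r % (s*p+1)) m = rot s p r m := by
  funext i
  show mm s p m ((i:ℕ) + r % (s*p+1)) = mm s p m ((i:ℕ) + r)
  exact mm_congr m (by
    rw [Nat.add_mod, Nat.mod_mod_of_dvd _ dvd_rfl, ← Nat.add_mod])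

/-- counting: good sequences times (s*p+1) rotations = all sequences -/
theorem card_good_mul :
    Nat.card {m : Fin (s*p+1) → ℕ // (∑ i, m i) = p ∧ Good s p m} * (s*p+1) =
    Nat.card {m : Fin (s*p+1) → ℕ // (∑ i, m i) = p} := by
  have hbij : Function.Bijective
      (fun x : {m : Fin (s*p+1) → ℕ // (∑ i, m i) = p ∧ Good s p m} × Fin (s*p+1) =>
        (⟨rot s p x.2.val x.1.val, sum_rot _ _ x.1.2.1⟩ :
          {m : Fin (s*p+1) → ℕ // (∑ i, m i) = p})) := by
    constructor
    · rintro ⟨⟨m₁, hm₁, hg₁⟩, r₁⟩ ⟨⟨m₂, hm₂, hg₂⟩, r₂⟩ heq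
      simp only [Subtype.mk.injEq, Prod.mk.injEq] at heq ⊢
      have heq' : rot s p r₁.val m₁ = rot s p r₂.val m₂ := heq
      -- m₂ = rot D m₁ with D = (s*p+1 - r₂) + r₁
      have hr₂ : (r₂ : ℕ) < s*p+1 := r₂.isLt
      have hr₁ : (r₁ : ℕ) < s*p+1 := r₁.isLt
      have hm2eq : m₂ = rot s p ((s*p+1 - r₂.val) + r₁.val) m₁ := by
        have h1 : m₂ = rot s p (s*p+1 - r₂.val) (rot s p r₂.val m₂) := by
          rw [rot_rot, show (s*p+1 - r₂.val) + r₂.val = s*p+1 by omega, rot_period]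
        rw [h1, ← heq', rot_rot]
      set D := (s*p+1 - r₂.val) + r₁.val with hD
      have hDpos : 0 < D := by omega
      have hD2 : D < 2 * (s*p+1) := by omega
      -- reduce to d < s*p+1
      obtain ⟨d, hd, hrotd⟩ : ∃ d, d < s*p+1 ∧ rot s p d m₁ = rot s p D m₁ ∧
          (D < s*p+1 → d = D) ∧ (s*p+1 ≤ D → d = D - (s*p+1)) := by
        rcases lt_or_ge D (s*p+1) with h | h
        · exact ⟨D, h, rfl, fun _ => rfl, fun h' => absurd h (not_lt.mpr h')⟩
        · refine ⟨D - (s*p+1), by omega, ?_, fun h' => absurd h' (not_lt.mpr h), fun _ => rfl⟩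
          conv_rhs => rw [show D = (D - (s*p+1)) + (s*p+1) by omega, ← rot_rot, rot_period]
      obtain ⟨hrotd, hcase⟩ := hrotd
      -- both 0 and d are good rotations of m₁
      obtain ⟨r, hrN, hrg, hruniq⟩ := existsUnique_good_rot m₁ hm₁
      have h0 : (0:ℕ) = r := hruniq 0 (by omega) (by rwa [rot_zero])
      have hdg : Good s p (rot s p d m₁) := by
        rw [hrotd, ← hm2eq]  -- rot D m₁ = m₂? no: hm2eq : m₂ = rot D m₁
        exact hg₂
      have hd0 : d = r := hruniq d hd hdg
      have hdzero : d = 0 := by omega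
      have hr12 : (r₁ : ℕ) = (r₂ : ℕ) := by
        rcases lt_or_ge D (s*p+1) with h | h
        · have := hcase.1 h; omega
        · have := hcase.2 h; omega
      have hfin : r₁ = r₂ := Fin.ext hr12
      have hDval : D = s*p+1 := by omega
      have hm12 : m₁ = m₂ := by
        rw [hm2eq, hDval, rot_period]
      exact ⟨hm12, hfin⟩
    · rintro ⟨m, hm⟩
      obtain ⟨r, hrN, hrg, _⟩ := existsUnique_good_rot m hm
      have hinv : ∃ r' < s*p+1, rot s p r' (rot s p r m) = m := by
        rcases Nat.eq_zero_or_pos r with h0 | hpos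
        · exact ⟨0, by omega, by rw [h0, rot_zero, rot_zero]⟩
        · refine ⟨s*p+1 - r, by omega, ?_⟩
          rw [rot_rot, show (s*p+1 - r) + r = s*p+1 by omega, rot_period]
      obtain ⟨r', hr', hr'eq⟩ := hinv
      exact ⟨⟨⟨rot s p r m, sum_rot r m hm, hrg⟩, ⟨r', hr'⟩⟩, Subtype.ext hr'eq⟩
  have := Nat.card_congr (Equiv.ofBijective _ hbij)
  rw [Nat.card_prod, Nat.card_eq_fintype_card (α := Fin (s*p+1)), Fintype.card_fin] at this
  exact this

/-- stars and bars -/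
theorem card_all :
    Nat.card {m : Fin (s*p+1) → ℕ // (∑ i, m i) = p} = Nat.choose (s*p+p) p := by
  classical
  have e : {m : Fin (s*p+1) → ℕ // (∑ i, m i) = p} ≃ Sym (Fin (s*p+1)) p := by
    refine ⟨fun m => ⟨∑ i, Multiset.replicate (m.1 i) i, ?_⟩,
      fun μ => ⟨fun i => μ.1.count i, ?_⟩, ?_, ?_⟩
    · rw [Multiset.card_sum]
      simpa [Multiset.card_replicate] using m.2
    · rw [Multiset.sum_count_eq_card (fun a _ => Finset.mem_univ a)]
      exact μ.2
    · rintro ⟨m, hm⟩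
      apply Subtype.ext
      funext i
      simp only
      rw [Multiset.count_sum']
      simp [Multiset.count_replicate]
    · rintro ⟨μ, hμ⟩
      apply Subtype.ext
      simp only
      have h1 : ∀ i : Fin (s*p+1), Multiset.replicate (μ.count i) i = μ.count i • {i} := by
        intro i; rw [Multiset.nsmul_singleton]
      calc ∑ i, Multiset.replicate (μ.count i) i = ∑ i, μ.count i • ({i} : Multiset _) := by
            simp [h1]
        _ = μ := by
            rw [← Finset.sum_subset (Finset.subset_univ μ.toFinset)
              (fun x _ hx => by
                rw [Multiset.count_eq_zero_of_notMem (by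
                  simpa using (fun h => hx (Multiset.mem_toFinset.mpr h)))]
                simp)]
            exact Multiset.toFinset_sum_count_nsmul_eq μ
  rw [Nat.card_congr e, Nat.card_eq_fintype_card, Sym.card_sym_eq_choose, Fintype.card_fin]
  congr 1
  omega


/-! ### From good sequences to partitions -/

lemma mm_small (m : Fin (s*p+1) → ℕ) {t : ℕ} (h : t < s*p+1) : mm s p m t = m ⟨t, h⟩ := by
  unfold mm
  congr 1
  exact Fin.ext (by simp [Fin.val_natCast, Nat.mod_eq_of_lt h])

section Partition

variable (hs : 0 < s) (m : Fin (s*p+1) → ℕ) (hm : ∑ i, m i = p) (hg : Good s p m)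

lemma G_eq (k : ℕ) : G s p m k = ((s * ∑ t ∈ Finset.range k, mm s p m t : ℕ) : ℤ) - (k:ℤ) := by
  unfold G
  push_cast
  ring

include hm hg in
lemma sum_range_sp : s * (∑ t ∈ Finset.range (s*p), mm s p m t) = s * p := by
  have h1 := hg (s*p) le_rfl
  rw [G_eq] at h1
  have h2 := sum_mm m hm
  have h3 : ∑ t ∈ Finset.range (s*p+1), mm s p m t
      = ∑ t ∈ Finset.range (s*p), mm s p m t + mm s p m (s*p) := Finset.sum_range_succ _ _
  have h4 : ∑ t ∈ Finset.range (s*p), mm s p m t ≤ p := by omega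
  have h5 : s * (∑ t ∈ Finset.range (s*p), mm s p m t) ≤ s * p := Nat.mul_le_mul_left s h4
  omega

include hm hg in
lemma G_sp : G s p m (s*p) = 0 := by
  rw [G_eq, sum_range_sp m hm hg]
  push_cast
  ring

include hs hm hg in
lemma mm_sp : mm s p m (s*p) = 0 := by
  have h1 := sum_range_sp m hm hg
  have h2 := sum_mm m hm
  have h3 : ∑ t ∈ Finset.range (s*p+1), mm s p m t
      = ∑ t ∈ Finset.range (s*p), mm s p m t + mm s p m (s*p) := Finset.sum_range_succ _ _
  have h4 : ∑ t ∈ Finset.range (s*p), mm s p m t = p :=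
    Nat.eq_of_mul_eq_mul_left hs h1
  omega

variable (s p) in
/-- `o` opens the block containing `j` -/
def pred (m : Fin (s*p+1) → ℕ) (o j : ℕ) : Prop :=
  0 < mm s p m o ∧ o ≤ j ∧ G s p m (j+1) ≤ G s p m (o+1) ∧ G s p m o ≤ G s p m (j+1) ∧
  ∀ k ∈ Finset.Ico o j, G s p m (j+1) < G s p m (k+1)

include hg in
lemma pred_exists {j : ℕ} (hj : j < s*p) : ∃ o, pred s p m o j := by
  classical
  set K := (Finset.range (j+1)).filter
    (fun o => ∀ k ∈ Finset.Ico o j, G s p m (j+1) < G s p m (k+1)) with hK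
  have hjK : j ∈ K := by
    rw [hK, Finset.mem_filter, Finset.mem_range]
    exact ⟨by omega, by simp⟩
  have hKne : K.Nonempty := ⟨j, hjK⟩
  set o := K.min' hKne with ho
  have hoK : o ∈ K := K.min'_mem hKne
  rw [hK, Finset.mem_filter, Finset.mem_range] at hoK
  obtain ⟨hoj, hoall⟩ := hoK
  have hoj' : o ≤ j := by omega
  -- G m o ≤ G m (j+1)
  have hGo : G s p m o ≤ G s p m (j+1) := by
    rcases Nat.eq_zero_or_pos o with h0 | hpos
    · rw [h0, G_zero]
      exact hg (j+1) (by omega)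
    · have hnm : o - 1 ∉ K := by
        intro hmem
        have := K.min'_le _ hmem
        omega
      rw [hK, Finset.mem_filter, Finset.mem_range] at hnm
      push_neg at hnm
      obtain ⟨k, hk, hkle⟩ := hnm (by omega)
      rw [Finset.mem_Ico] at hk
      rcases Nat.lt_or_ge k o with h | h
      · have : k = o - 1 := by omega
        rw [this] at hkle
        rw [show o - 1 + 1 = o by omega] at hkle
        exact hkle
      · exfalso
        have := hoall k (Finset.mem_Ico.mpr ⟨h, hk.2⟩)
        omega
  have hmo : 0 < mm s p m o := by
    by_contra hcon
    push_neg at hcon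
    have h0 : mm s p m o = 0 := by omega
    have hGsucc : G s p m (o+1) = G s p m o - 1 := by
      rw [G_succ, h0]
      push_cast
      ring
    rcases Nat.lt_or_ge o j with h | h
    · have := hoall o (Finset.mem_Ico.mpr ⟨le_rfl, h⟩)
      omega
    · have : o = j := by omega
      rw [this] at hGsucc hGo
      omega
  refine ⟨o, hmo, hoj', ?_, hGo, hoall⟩
  rcases Nat.lt_or_ge o j with h | h
  · exact le_of_lt (hoall o (Finset.mem_Ico.mpr ⟨le_rfl, h⟩))
  · have : o = j := by omega
    rw [this]

lemma pred_unique {o₁ o₂ j : ℕ} (h₁ : pred s p m o₁ j) (h₂ : pred s p m o₂ j) : o₁ = o₂ := by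
  by_contra hne
  have key : ∀ a b, pred s p m a j → pred s p m b j → a < b → False := by
    intro a b ha hb hab
    have hb1 : 1 ≤ b := by omega
    have hmem : b - 1 ∈ Finset.Ico a j := Finset.mem_Ico.mpr ⟨by omega, by
      have := hb.2.1; omega⟩
    have := ha.2.2.2.2 (b-1) hmem
    rw [show b - 1 + 1 = b by omega] at this
    have := hb.2.2.2.1
    omega
  rcases lt_or_gt_of_ne hne with h | h
  · exact key o₁ o₂ h₁ h₂ h
  · exact key o₂ o₁ h₂ h₁ h

include hg in
lemma pred_exu {j : ℕ} (hj : j < s*p) : ∃! o, pred s p m o j := by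
  obtain ⟨o, ho⟩ := pred_exists m hg hj
  exact ⟨o, ho, fun o' ho' => pred_unique m ho' ho⟩

variable (s p) in
/-- the opener of the block of `j` -/
noncomputable def om (m : Fin (s*p+1) → ℕ) (hg : Good s p m) (j : Fin (s*p)) : ℕ :=
  Classical.choose (pred_exu m hg j.isLt)

include hg

lemma om_pred (j : Fin (s*p)) : pred s p m (om s p m hg j) j.val :=
  (Classical.choose_spec (pred_exu m hg j.isLt)).1

lemma om_eq_of_pred {o : ℕ} {j : Fin (s*p)} (h : pred s p m o j.val) : om s p m hg j = o :=
  (pred_unique m (om_pred m hg j) h)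

lemma om_le (j : Fin (s*p)) : om s p m hg j ≤ j.val := (om_pred m hg j).2.1

lemma om_lt (j : Fin (s*p)) : om s p m hg j < s*p := lt_of_le_of_lt (om_le m hg j) j.isLt

lemma om_mm_pos (j : Fin (s*p)) : 0 < mm s p m (om s p m hg j) := (om_pred m hg j).1

/-- openers are fixed by `om`. -/
lemma om_opener {o : ℕ} (ho : o < s*p) (hmo : 0 < mm s p m o) :
    om s p m hg ⟨o, ho⟩ = o := by
  apply om_eq_of_pred m hg
  show pred s p m o o
  refine ⟨hmo, le_rfl, le_rfl, ?_, by simp⟩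
  · rw [G_succ]
    have : (1:ℤ) ≤ (s:ℤ) * mm s p m o := by
      have h1 : (1:ℤ) ≤ (s:ℤ) := by
        have hspos : 0 < s := by
          rcases Nat.eq_zero_or_pos s with h | h
          · exfalso; rw [h] at ho; omega
          · exact h
        exact_mod_cast hspos
      have h2 : (1:ℤ) ≤ (mm s p m o : ℤ) := by exact_mod_cast hmo
      nlinarith
    omega

/-- non-openers are not fixed. -/
lemma om_lt_of_mm_zero {j : Fin (s*p)} (hmj : mm s p m j.val = 0) :
    om s p m hg j < j.val := by
  rcases Nat.lt_or_ge (om s p m hg j) j.val with h | h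
  · exact h
  · exfalso
    have h1 := om_le m hg j
    have h2 : om s p m hg j = j.val := by omega
    have := om_mm_pos m hg j
    rw [h2, hmj] at this
    omega

variable (s p) in
/-- The non-crossing partition associated with a good sequence. -/
noncomputable def ncp (m : Fin (s*p+1) → ℕ) (hg : Good s p m) :
    Finpartition (Finset.univ : Finset (Fin (s*p))) :=
  @Finpartition.ofSetoid (Fin (s*p)) _ _ (Setoid.ker (om s p m hg))
    (fun a b => Nat.decEq _ _)

lemma mem_part_ncp {x j : Fin (s*p)} :
    x ∈ (ncp s p m hg).part j ↔ om s p m hg x = om s p m hg j := by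
  letI : DecidableRel (Setoid.ker (om s p m hg)).r := fun a b => Nat.decEq _ _
  rw [ncp, Finpartition.mem_part_ofSetoid_iff_rel]
  exact ⟨fun h => h.symm, fun h => h.symm⟩

/-- the opener is in its own block -/
lemma om_self_mem {j : Fin (s*p)} :
    (⟨om s p m hg j, om_lt m hg j⟩ : Fin (s*p)) ∈ (ncp s p m hg).part j := by
  rw [mem_part_ncp m hg]
  exact om_opener m hg (om_lt m hg j) (om_mm_pos m hg j)

include hm in
lemma pred_of_level {o : ℕ} (ho : o < s*p) (hmo : 0 < mm s p m o) {v : ℤ}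
    (hv1 : G s p m o ≤ v) (hv2 : v ≤ G s p m (o+1)) :
    ∃ t, t < s*p ∧ pred s p m o t ∧ G s p m (t+1) = v := by
  classical
  set T := (Finset.Ico o (s*p)).filter (fun t => G s p m (t+1) ≤ v) with hT
  have hvnn : 0 ≤ v := le_trans (hg o (by omega)) hv1
  have hTop : s*p - 1 ∈ T := by
    rw [hT, Finset.mem_filter, Finset.mem_Ico]
    refine ⟨⟨by omega, by omega⟩, ?_⟩
    rw [show s*p - 1 + 1 = s*p by omega, G_sp m hm hg]
    exact hvnn
  have hTne : T.Nonempty := ⟨_, hTop⟩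
  set t := T.min' hTne with ht
  have htT : t ∈ T := T.min'_mem hTne
  rw [hT, Finset.mem_filter, Finset.mem_Ico] at htT
  obtain ⟨⟨hot, htn⟩, htv⟩ := htT
  have hmin : ∀ k ∈ Finset.Ico o t, v < G s p m (k+1) := by
    intro k hk
    rw [Finset.mem_Ico] at hk
    by_contra hcon
    push_neg at hcon
    have hkT : k ∈ T := by
      rw [hT, Finset.mem_filter, Finset.mem_Ico]
      exact ⟨⟨hk.1, by omega⟩, hcon⟩
    have := T.min'_le _ hkT
    omega
  have heq : G s p m (t+1) = v := by
    rcases Nat.eq_or_lt_of_le hot with h | h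
    · rw [← h] at htv ⊢
      omega
    · have hprev : v < G s p m t := by
        have := hmin (t-1) (Finset.mem_Ico.mpr ⟨by omega, by omega⟩)
        rwa [show t - 1 + 1 = t by omega] at this
      have hstep : G s p m (t+1) = G s p m t + s * mm s p m t - 1 := G_succ m t
      have hnn : (0:ℤ) ≤ (s:ℤ) * mm s p m t := by positivity
      omega
  refine ⟨t, htn, ⟨hmo, hot, by omega, by omega, fun k hk => ?_⟩, heq⟩
  rw [heq]
  exact hmin k hk

include hm in
lemma card_part_ncp (j : Fin (s*p)) :
    ((ncp s p m hg).part j).card = s * mm s p m (om s p m hg j) := by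
  classical
  set o := om s p m hg j with ho
  have hpred := om_pred m hg j
  have hstep : G s p m (o+1) = G s p m o + s * mm s p m o - 1 := G_succ m o
  have hcard : ((ncp s p m hg).part j).card
      = (Finset.Icc (G s p m o) (G s p m (o+1))).card := by
    apply Finset.card_bij (fun x _ => G s p m (x.val+1))
    · intro x hx
      rw [mem_part_ncp m hg] at hx
      have hpx : pred s p m o x.val := by rw [ho, ← hx]; exact om_pred m hg x
      rw [Finset.mem_Icc]
      exact ⟨hpx.2.2.2.1, hpx.2.2.1⟩
    · intro x₁ hx₁ x₂ hx₂ hGeq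
      rw [mem_part_ncp m hg] at hx₁ hx₂
      have hp₁ : pred s p m o x₁.val := by rw [ho, ← hx₁]; exact om_pred m hg x₁
      have hp₂ : pred s p m o x₂.val := by rw [ho, ← hx₂]; exact om_pred m hg x₂
      by_contra hne
      have hvne : x₁.val ≠ x₂.val := fun h => hne (Fin.ext h)
      rcases lt_or_gt_of_ne hvne with h | h
      · have := hp₂.2.2.2.2 x₁.val (Finset.mem_Ico.mpr ⟨hp₁.2.1, h⟩)
        omega
      · have := hp₁.2.2.2.2 x₂.val (Finset.mem_Ico.mpr ⟨hp₂.2.1, h⟩)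
        omega
    · intro v hv
      rw [Finset.mem_Icc] at hv
      obtain ⟨t, htn, hpt, hGt⟩ := pred_of_level m hm hg (om_lt m hg j)
        (om_mm_pos m hg j) hv.1 hv.2
      refine ⟨⟨t, htn⟩, ?_, hGt⟩
      rw [mem_part_ncp m hg]
      exact om_eq_of_pred m hg hpt
  rw [hcard, Int.card_Icc]
  have hmms : (0:ℤ) ≤ (s:ℤ) * mm s p m o := by positivity
  have : G s p m (o+1) + 1 - G s p m o = (s:ℤ) * mm s p m o := by omega
  rw [this]
  rw [show ((s:ℤ) * mm s p m o) = ((s * mm s p m o : ℕ) : ℤ) by push_cast; ring]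
  exact Int.toNat_natCast _

include hm in
lemma parts_card_dvd (b : Finset (Fin (s*p))) (hb : b ∈ (ncp s p m hg).parts) :
    s ∣ b.card := by
  obtain ⟨x, hx⟩ := (ncp s p m hg).nonempty_of_mem_parts hb
  have : (ncp s p m hg).part x = b := (ncp s p m hg).part_eq_of_mem hb hx
  rw [← this, card_part_ncp m hm hg]
  exact Dvd.intro _ rfl

lemma ncp_noncrossing : IsNonCrossing (ncp s p m hg) := by
  rintro ⟨a, b, c, d, X, Y, hX, hY, hXY, hab, hbc, hcd, haX, hcX, hbY, hdY⟩
  have hXa : (ncp s p m hg).part a = X := (ncp s p m hg).part_eq_of_mem hX haX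
  have hYb : (ncp s p m hg).part b = Y := (ncp s p m hg).part_eq_of_mem hY hbY
  have hac : om s p m hg c = om s p m hg a := by
    have : c ∈ (ncp s p m hg).part a := by rw [hXa]; exact hcX
    rwa [mem_part_ncp m hg] at this
  have hbd : om s p m hg d = om s p m hg b := by
    have : d ∈ (ncp s p m hg).part b := by rw [hYb]; exact hdY
    rwa [mem_part_ncp m hg] at this
  have ho₁a : om s p m hg a ≤ a.val := om_le m hg a
  have ho₂b : om s p m hg b ≤ b.val := om_le m hg b
  have hab' : a.val < b.val := hab
  have hbc' : b.val < c.val := hbc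
  have hcd' : c.val < d.val := hcd
  have hpc : pred s p m (om s p m hg a) c.val := by rw [← hac]; exact om_pred m hg c
  have hpd : pred s p m (om s p m hg b) d.val := by rw [← hbd]; exact om_pred m hg d
  have hpb : pred s p m (om s p m hg b) b.val := om_pred m hg b
  have hne : om s p m hg a ≠ om s p m hg b := by
    intro h
    apply hXY
    rw [← hXa, ← hYb]
    apply (ncp s p m hg).eq_of_mem_parts ((ncp s p m hg).part_mem.mpr (Finset.mem_univ a))
      ((ncp s p m hg).part_mem.mpr (Finset.mem_univ b))
    · exact (ncp s p m hg).mem_part (Finset.mem_univ a)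
    · rw [mem_part_ncp m hg]
      exact h
  rcases lt_or_gt_of_ne hne with h | h
  · -- om a < om b
    have h1 : G s p m (c.val+1) < G s p m (om s p m hg b) := by
      have := hpc.2.2.2.2 (om s p m hg b - 1) (Finset.mem_Ico.mpr ⟨by omega, by omega⟩)
      rwa [show om s p m hg b - 1 + 1 = om s p m hg b by omega] at this
    have h2 : G s p m (om s p m hg b) ≤ G s p m (d.val+1) := hpd.2.2.2.1
    have h3 : G s p m (d.val+1) < G s p m (c.val+1) := by
      apply hpd.2.2.2.2 c.val (Finset.mem_Ico.mpr ⟨by omega, by omega⟩)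
    omega
  · -- om b < om a
    have h1 : G s p m (b.val+1) < G s p m (om s p m hg a) := by
      have := hpb.2.2.2.2 (om s p m hg a - 1) (Finset.mem_Ico.mpr ⟨by omega, by omega⟩)
      rwa [show om s p m hg a - 1 + 1 = om s p m hg a by omega] at this
    have h2 : G s p m (om s p m hg a) ≤ G s p m (c.val+1) := hpc.2.2.2.1
    have h3 : G s p m (c.val+1) < G s p m (b.val+1) := by
      apply hpc.2.2.2.2 b.val (Finset.mem_Ico.mpr ⟨by omega, by omega⟩)
    omega

end Partition

/-! ### From partitions to good sequences -/

section PartitionOf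

lemma card_val_lt {k : ℕ} (hk : k ≤ s*p) :
    ((Finset.univ : Finset (Fin (s*p))).filter (fun x => x.val < k)).card = k := by
  have hall : ∀ t ∈ Finset.range k, t < s*p := fun t ht => by
    rw [Finset.mem_range] at ht; omega
  have : (Finset.univ : Finset (Fin (s*p))).filter (fun x => x.val < k)
      = (Finset.range k).attachFin hall := by
    ext x
    simp [Finset.mem_attachFin, Finset.mem_range]
  rw [this, Finset.card_attachFin, Finset.card_range]

variable (s p) in
/-- the candidate sequence associated with a partition -/
def mOf (P : Finpartition (Finset.univ : Finset (Fin (s*p)))) : Fin (s*p+1) → ℕ :=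
  fun i => if h : (i:ℕ) < s*p then
    (if ∀ x ∈ P.part ⟨i,h⟩, (⟨i,h⟩ : Fin (s*p)) ≤ x then (P.part ⟨i,h⟩).card / s else 0)
  else 0

variable (s p) in
/-- the minimum of the block of `j` -/
def mu (P : Finpartition (Finset.univ : Finset (Fin (s*p)))) (j : Fin (s*p)) :
    Fin (s*p) :=
  (P.part j).min' ⟨j, P.mem_part (Finset.mem_univ j)⟩

variable (P : Finpartition (Finset.univ : Finset (Fin (s*p))))

lemma mu_mem (j : Fin (s*p)) : mu s p P j ∈ P.part j := Finset.min'_mem _ _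

lemma mu_le (j : Fin (s*p)) : mu s p P j ≤ j :=
  Finset.min'_le _ _ (P.mem_part (Finset.mem_univ j))

lemma mu_min (j : Fin (s*p)) {x : Fin (s*p)} (hx : x ∈ P.part j) : mu s p P j ≤ x :=
  Finset.min'_le _ _ hx

lemma part_mu (j : Fin (s*p)) : P.part (mu s p P j) = P.part j :=
  P.part_eq_of_mem (P.part_mem.mpr (Finset.mem_univ j)) (mu_mem P j)

lemma mu_congr {x j : Fin (s*p)} (h : P.part x = P.part j) : mu s p P x = mu s p P j := by
  unfold mu
  congr 1

lemma mu_mu (j : Fin (s*p)) : mu s p P (mu s p P j) = mu s p P j :=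
  mu_congr P (part_mu P j)

lemma mem_part_iff_mu {x j : Fin (s*p)} :
    x ∈ P.part j ↔ mu s p P x = mu s p P j := by
  constructor
  · intro h
    exact mu_congr P (P.part_eq_of_mem (P.part_mem.mpr (Finset.mem_univ j)) h)
  · intro h
    have h1 : P.part x = P.part j := by
      have hx : x ∈ P.part (mu s p P x) := by rw [part_mu]; exact P.mem_part (Finset.mem_univ x)
      rw [h, part_mu] at hx
      exact P.part_eq_of_mem (P.part_mem.mpr (Finset.mem_univ j)) hx
    rw [← h1]
    exact P.mem_part (Finset.mem_univ x)

lemma min_test_iff (j : Fin (s*p)) :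
    (∀ x ∈ P.part j, j ≤ x) ↔ mu s p P j = j := by
  constructor
  · intro h
    exact le_antisymm (mu_le P j) (h _ (mu_mem P j))
  · intro h x hx
    rw [← h]
    exact mu_min P j hx

lemma mm_mOf_lt {t : ℕ} (h : t < s*p) :
    mm s p (mOf s p P) t
      = if mu s p P ⟨t, h⟩ = ⟨t, h⟩ then (P.part ⟨t, h⟩).card / s else 0 := by
  rw [mm_small _ (by omega), mOf]
  rw [dif_pos h]
  by_cases hc : mu s p P ⟨t, h⟩ = ⟨t, h⟩
  · rw [if_pos ((min_test_iff P _).mpr hc), if_pos hc]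
  · rw [if_neg (fun hc' => hc ((min_test_iff P _).mp hc')), if_neg hc]

lemma mm_mOf_sp : mm s p (mOf s p P) (s*p) = 0 := by
  rw [mm_small _ (by omega), mOf, dif_neg (by simp)]

variable (hs : 0 < s) (hdiv : ∀ b ∈ P.parts, s ∣ b.card)

include hdiv in
lemma sum_prefix {k : ℕ} (hk : k ≤ s*p) :
    s * (∑ t ∈ Finset.range k, mm s p (mOf s p P) t)
      = ((Finset.univ : Finset (Fin (s*p))).filter
          (fun x => (mu s p P x).val < k)).card := by
  classical
  set T := (Finset.univ : Finset (Fin (s*p))).filter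
    (fun x => mu s p P x = x ∧ x.val < k) with hT
  have h1 : ∑ t ∈ Finset.range k, mm s p (mOf s p P) t
      = ∑ x ∈ T, (P.part x).card / s := by
    have hF1 : ∑ t ∈ Finset.range k, mm s p (mOf s p P) t
        = ∑ t ∈ Finset.range (s*p), (if t < k then mm s p (mOf s p P) t else 0) := by
      rw [← Finset.sum_subset (Finset.range_subset_range.mpr hk)
        (fun x _ hnx => if_neg (fun hlt => hnx (Finset.mem_range.mpr hlt)))]
      exact Finset.sum_congr rfl (fun t ht => (if_pos (Finset.mem_range.mp ht)).symm)
    have hF2 : ∑ t ∈ Finset.range (s*p), (if t < k then mm s p (mOf s p P) t else 0)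
        = ∑ x : Fin (s*p), (if (x:ℕ) < k then mm s p (mOf s p P) x.val else 0) :=
      (Fin.sum_univ_eq_sum_range (fun t => if t < k then mm s p (mOf s p P) t else 0) _).symm
    have hF3 : ∑ x : Fin (s*p), (if (x:ℕ) < k then mm s p (mOf s p P) x.val else 0)
        = ∑ x ∈ (Finset.univ : Finset (Fin (s*p))).filter (fun x => x.val < k),
            mm s p (mOf s p P) x.val := (Finset.sum_filter _ _).symm
    have hF4 : ∑ x ∈ (Finset.univ : Finset (Fin (s*p))).filter (fun x => x.val < k),
            mm s p (mOf s p P) x.val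
        = ∑ x ∈ (Finset.univ : Finset (Fin (s*p))).filter (fun x => x.val < k),
            (if mu s p P x = x then (P.part x).card / s else 0) := by
      apply Finset.sum_congr rfl
      intro x hx
      have := mm_mOf_lt P (t := x.val) x.isLt
      simpa [Fin.eta] using this
    have hF5 : ∑ x ∈ (Finset.univ : Finset (Fin (s*p))).filter (fun x => x.val < k),
            (if mu s p P x = x then (P.part x).card / s else 0)
        = ∑ x ∈ ((Finset.univ : Finset (Fin (s*p))).filter (fun x => x.val < k)).filter
            (fun x => mu s p P x = x), (P.part x).card / s := (Finset.sum_filter _ _).symm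
    have hT' : T = ((Finset.univ : Finset (Fin (s*p))).filter (fun x => x.val < k)).filter
        (fun x => mu s p P x = x) := by
      rw [hT, Finset.filter_filter]
      apply Finset.filter_congr
      intro x _
      tauto
    rw [hF1, hF2, hF3, hF4, hF5, ← hT']
  have h2 : s * (∑ x ∈ T, (P.part x).card / s) = ∑ x ∈ T, (P.part x).card := by
    rw [Finset.mul_sum]
    apply Finset.sum_congr rfl
    intro x _
    exact Nat.mul_div_cancel' (hdiv _ (P.part_mem.mpr (Finset.mem_univ x)))
  have hdisj : ∀ x ∈ T, ∀ y ∈ T, x ≠ y → Disjoint (P.part x) (P.part y) := by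
    intro x hx y hy hxy
    rw [hT, Finset.mem_filter] at hx hy
    by_contra hcon
    obtain ⟨z, hzx, hzy⟩ := Finset.not_disjoint_iff.mp hcon
    apply hxy
    have h1 : mu s p P z = mu s p P x := (mem_part_iff_mu P).mp hzx
    have h2 : mu s p P z = mu s p P y := (mem_part_iff_mu P).mp hzy
    rw [← hx.2.1, ← hy.2.1, ← h1, ← h2]
  have h3 : ∑ x ∈ T, (P.part x).card = (T.biUnion (fun x => P.part x)).card :=
    (Finset.card_biUnion hdisj).symm
  have h4 : T.biUnion (fun x => P.part x)
      = (Finset.univ : Finset (Fin (s*p))).filter (fun x => (mu s p P x).val < k) := by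
    ext z
    rw [Finset.mem_biUnion, Finset.mem_filter]
    constructor
    · rintro ⟨x, hxT, hzx⟩
      rw [hT, Finset.mem_filter] at hxT
      have h5 : mu s p P z = mu s p P x := (mem_part_iff_mu P).mp hzx
      rw [hxT.2.1] at h5
      refine ⟨Finset.mem_univ z, ?_⟩
      rw [h5]
      exact hxT.2.2
    · rintro ⟨-, hz⟩
      refine ⟨mu s p P z, ?_, ?_⟩
      · rw [hT, Finset.mem_filter]
        exact ⟨Finset.mem_univ _, mu_mu P z, hz⟩
      · rw [part_mu]
        exact P.mem_part (Finset.mem_univ z)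
  rw [h1, h2, h3, h4]

include hdiv in
lemma good_mOf : Good s p (mOf s p P) := by
  intro k hk
  rw [G_eq, sum_prefix P hdiv hk]
  have hsub : (Finset.univ : Finset (Fin (s*p))).filter (fun x => x.val < k)
      ⊆ (Finset.univ : Finset (Fin (s*p))).filter (fun x => (mu s p P x).val < k) := by
    intro x hx
    rw [Finset.mem_filter] at hx ⊢
    refine ⟨hx.1, ?_⟩
    have := mu_le P x
    have h1 : (mu s p P x).val ≤ x.val := this
    omega
  have hcard := Finset.card_le_card hsub
  rw [card_val_lt hk] at hcard
  have : (k:ℤ) ≤ (((Finset.univ : Finset (Fin (s*p))).filter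
      (fun x => (mu s p P x).val < k)).card : ℤ) := by exact_mod_cast hcard
  omega

include hdiv hs in
lemma sum_mOf : ∑ i, mOf s p P i = p := by
  have h1 : ∑ t ∈ Finset.range (s*p+1), mm s p (mOf s p P) t
      = ∑ t ∈ Finset.range (s*p), mm s p (mOf s p P) t + mm s p (mOf s p P) (s*p) :=
    Finset.sum_range_succ _ _
  have h2 := sum_prefix P hdiv (le_refl (s*p))
  have h3 : (Finset.univ : Finset (Fin (s*p))).filter (fun x => (mu s p P x).val < s*p)
      = (Finset.univ : Finset (Fin (s*p))) := by
    apply Finset.filter_true_of_mem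
    intro x _
    have h4 : (mu s p P x).val ≤ x.val := mu_le P x
    have := x.isLt
    omega
  rw [h3, Finset.card_univ, Fintype.card_fin] at h2
  have h5 : s * (∑ t ∈ Finset.range (s*p), mm s p (mOf s p P) t) = s * p := h2
  have h6 : ∑ t ∈ Finset.range (s*p), mm s p (mOf s p P) t = p :=
    Nat.eq_of_mul_eq_mul_left hs h5
  rw [← sum_range_mm, h1, h6, mm_mOf_sp]
  omega

include hdiv in
lemma L_card {t : ℕ} (ht : t < s*p) :
    G s p (mOf s p P) (t+1)
      = (((Finset.univ : Finset (Fin (s*p))).filter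
          (fun x => (mu s p P x).val ≤ t ∧ t < x.val)).card : ℤ) := by
  classical
  rw [G_eq, sum_prefix P hdiv (by omega : t+1 ≤ s*p)]
  have hsplit : (Finset.univ : Finset (Fin (s*p))).filter (fun x => (mu s p P x).val < t+1)
      = ((Finset.univ : Finset (Fin (s*p))).filter (fun x => x.val ≤ t))
        ∪ ((Finset.univ : Finset (Fin (s*p))).filter
            (fun x => (mu s p P x).val ≤ t ∧ t < x.val)) := by
    ext x
    simp only [Finset.mem_filter, Finset.mem_union, Finset.mem_univ, true_and]
    have hle : (mu s p P x).val ≤ x.val := mu_le P x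
    omega
  have hdisj : Disjoint
      ((Finset.univ : Finset (Fin (s*p))).filter (fun x => x.val ≤ t))
      ((Finset.univ : Finset (Fin (s*p))).filter
        (fun x => (mu s p P x).val ≤ t ∧ t < x.val)) := by
    rw [Finset.disjoint_left]
    intro x hx hx'
    rw [Finset.mem_filter] at hx hx'
    omega
  have hc1 : ((Finset.univ : Finset (Fin (s*p))).filter (fun x => x.val ≤ t)).card = t+1 := by
    have : (Finset.univ : Finset (Fin (s*p))).filter (fun x => x.val ≤ t)
        = (Finset.univ : Finset (Fin (s*p))).filter (fun x => x.val < t+1) := by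
      apply Finset.filter_congr
      intro x _
      omega
    rw [this, card_val_lt (by omega)]
  rw [hsplit, Finset.card_union_of_disjoint hdisj, hc1]
  push_cast
  ring

include hdiv in
lemma G_card {o : ℕ} (ho : o ≤ s*p) :
    G s p (mOf s p P) o
      = (((Finset.univ : Finset (Fin (s*p))).filter
          (fun x => (mu s p P x).val < o ∧ o ≤ x.val)).card : ℤ) := by
  classical
  rcases Nat.eq_zero_or_pos o with h0 | hpos
  · subst h0
    rw [G_zero]
    have : (Finset.univ : Finset (Fin (s*p))).filter
        (fun x => (mu s p P x).val < 0 ∧ 0 ≤ x.val) = ∅ := by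
      apply Finset.filter_false_of_mem
      intro x _
      omega
    rw [this]
    simp
  · have := L_card P hdiv (t := o-1) (by omega)
    rw [show o - 1 + 1 = o by omega] at this
    rw [this]
    congr 2
    apply Finset.filter_congr
    intro x _
    omega

variable (hNC : IsNonCrossing P)

include hNC in
lemma open_le {x j : Fin (s*p)} (hmux : (mu s p P x).val ≤ j.val) (hjx : j.val < x.val)
    {k : ℕ} (hk : (mu s p P j).val ≤ k) (hkx : k < (mu s p P x).val) : False := by
  have hne : P.part j ≠ P.part x := by
    intro h
    have := mu_congr P h
    omega
  have hbc : (mu s p P x).val < j.val := by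
    rcases Nat.lt_or_ge (mu s p P x).val j.val with h | h
    · exact h
    · exfalso
      have hxj : (mu s p P x) = j := Fin.ext (by omega)
      have : j ∈ P.part x := hxj ▸ mu_mem P x
      have := (mem_part_iff_mu P).mp this
      have := mu_congr P (P.part_eq_of_mem (P.part_mem.mpr (Finset.mem_univ x))
        ((hxj ▸ mu_mem P x : j ∈ P.part x)))
      omega
  apply hNC
  refine ⟨mu s p P j, mu s p P x, j, x, P.part j, P.part x,
    P.part_mem.mpr (Finset.mem_univ j), P.part_mem.mpr (Finset.mem_univ x), hne,
    ?_, ?_, ?_, mu_mem P j, P.mem_part (Finset.mem_univ j), mu_mem P x,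
    P.mem_part (Finset.mem_univ x)⟩
  · show (mu s p P j).val < (mu s p P x).val
    omega
  · show (mu s p P x).val < j.val
    omega
  · show j.val < x.val
    omega

include hNC hdiv hs in
lemma pred_mOf (j : Fin (s*p)) :
    pred s p (mOf s p P) (mu s p P j).val j.val := by
  classical
  have hosp : (mu s p P j).val < s*p := (mu s p P j).isLt
  have hoj : (mu s p P j).val ≤ j.val := mu_le P j
  have hcardpos : 0 < (P.part j).card / s := by
    have hdv := hdiv _ (P.part_mem.mpr (Finset.mem_univ j))
    have hpos : 0 < (P.part j).card :=
      Finset.card_pos.mpr ⟨j, P.mem_part (Finset.mem_univ j)⟩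
    have := Nat.le_of_dvd hpos hdv
    exact Nat.div_pos this hs
  have hmmo : mm s p (mOf s p P) (mu s p P j).val = (P.part j).card / s := by
    rw [mm_mOf_lt P hosp]
    rw [if_pos (by rw [Fin.eta]; exact mu_mu P j)]
    rw [Fin.eta, part_mu]
  refine ⟨by rw [hmmo]; exact hcardpos, hoj, ?_, ?_, ?_⟩
  · -- G (j+1) ≤ G (mu j + 1)
    rw [L_card P hdiv j.isLt, L_card P hdiv hosp]
    have hsub : (Finset.univ : Finset (Fin (s*p))).filter
          (fun x => (mu s p P x).val ≤ j.val ∧ j.val < x.val)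
        ⊆ (Finset.univ : Finset (Fin (s*p))).filter
          (fun x => (mu s p P x).val ≤ (mu s p P j).val ∧ (mu s p P j).val < x.val) := by
      intro x hx
      rw [Finset.mem_filter] at hx ⊢
      obtain ⟨-, hx1, hx2⟩ := hx
      refine ⟨Finset.mem_univ x, ?_, by omega⟩
      by_contra hcon
      push_neg at hcon
      exact open_le P hNC hx1 hx2 le_rfl hcon
    exact_mod_cast Finset.card_le_card hsub
  · -- G (mu j) ≤ G (j+1)
    rw [G_card P hdiv (by omega), L_card P hdiv j.isLt]
    have hsub : (Finset.univ : Finset (Fin (s*p))).filter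
          (fun x => (mu s p P x).val < (mu s p P j).val ∧ (mu s p P j).val ≤ x.val)
        ⊆ (Finset.univ : Finset (Fin (s*p))).filter
          (fun x => (mu s p P x).val ≤ j.val ∧ j.val < x.val) := by
      intro x hx
      rw [Finset.mem_filter] at hx ⊢
      obtain ⟨-, hx1, hx2⟩ := hx
      refine ⟨Finset.mem_univ x, by omega, ?_⟩
      by_contra hcon
      push_neg at hcon
      -- x ≤ j; derive a crossing a = mu x, b = mu j, c = x, d = j
      have hnex : P.part x ≠ P.part j := by
        intro h
        have := mu_congr P h
        omega
      have hbx : (mu s p P j).val < x.val := by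
        rcases Nat.lt_or_ge (mu s p P j).val x.val with h | h
        · exact h
        · exfalso
          have hxj : (mu s p P j) = x := Fin.ext (by omega)
          have hmem : x ∈ P.part j := hxj ▸ mu_mem P j
          have := mu_congr P (P.part_eq_of_mem (P.part_mem.mpr (Finset.mem_univ j)) hmem)
          omega
      have hxjne : x.val < j.val := by
        rcases Nat.lt_or_ge x.val j.val with h | h
        · exact h
        · exfalso
          have hxj : x = j := Fin.ext (by omega)
          rw [hxj] at hx1
          omega
      apply hNC
      exact ⟨mu s p P x, mu s p P j, x, j, P.part x, P.part j,
        P.part_mem.mpr (Finset.mem_univ x), P.part_mem.mpr (Finset.mem_univ j), hnex,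
        show (mu s p P x).val < (mu s p P j).val from hx1,
        show (mu s p P j).val < x.val from hbx,
        show x.val < j.val from hxjne,
        mu_mem P x, P.mem_part (Finset.mem_univ x), mu_mem P j,
        P.mem_part (Finset.mem_univ j)⟩
    exact_mod_cast Finset.card_le_card hsub
  · -- strict inequalities on [mu j, j)
    intro k hkmem
    rw [Finset.mem_Ico] at hkmem
    obtain ⟨hk1, hk2⟩ := hkmem
    have hksp : k < s*p := by omega
    rw [L_card P hdiv j.isLt, L_card P hdiv hksp]
    have hsub : (Finset.univ : Finset (Fin (s*p))).filter
          (fun x => (mu s p P x).val ≤ j.val ∧ j.val < x.val)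
        ⊂ (Finset.univ : Finset (Fin (s*p))).filter
          (fun x => (mu s p P x).val ≤ k ∧ k < x.val) := by
      rw [Finset.ssubset_iff_of_subset]
      · refine ⟨j, ?_, ?_⟩
        · rw [Finset.mem_filter]
          exact ⟨Finset.mem_univ j, hk1, hk2⟩
        · rw [Finset.mem_filter]
          push_neg
          intro _ _
          omega
      · intro x hx
        rw [Finset.mem_filter] at hx ⊢
        obtain ⟨-, hx1, hx2⟩ := hx
        refine ⟨Finset.mem_univ x, ?_, by omega⟩
        by_contra hcon
        push_neg at hcon
        exact open_le P hNC hx1 hx2 hk1 hcon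
    exact_mod_cast Finset.card_lt_card hsub

include hdiv hs hNC in
lemma om_mOf (j : Fin (s*p)) :
    om s p (mOf s p P) (good_mOf P hdiv) j = (mu s p P j).val :=
  om_eq_of_pred _ _ (pred_mOf P hs hdiv hNC j)

lemma parts_eq_image (Q : Finpartition (Finset.univ : Finset (Fin (s*p)))) :
    Q.parts = Finset.univ.image Q.part := by
  ext b
  rw [Finset.mem_image]
  constructor
  · intro hb
    obtain ⟨x, hx⟩ := Q.nonempty_of_mem_parts hb
    exact ⟨x, Finset.mem_univ x, Q.part_eq_of_mem hb hx⟩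
  · rintro ⟨j, -, rfl⟩
    exact Q.part_mem.mpr (Finset.mem_univ j)

include hdiv hs hNC in
lemma ncp_mOf : ncp s p (mOf s p P) (good_mOf P hdiv) = P := by
  have hpart : ∀ j, (ncp s p (mOf s p P) (good_mOf P hdiv)).part j = P.part j := by
    intro j
    ext x
    rw [mem_part_ncp _ (good_mOf P hdiv), om_mOf P hs hdiv hNC, om_mOf P hs hdiv hNC]
    constructor
    · intro h
      exact (mem_part_iff_mu P).mpr (Fin.ext h)
    · intro h
      exact congrArg Fin.val ((mem_part_iff_mu P).mp h)
  apply Finpartition.ext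
  rw [parts_eq_image (ncp s p (mOf s p P) (good_mOf P hdiv)), parts_eq_image P]
  exact Finset.image_congr (fun j _ => hpart j)

end PartitionOf

/-! ### second round trip -/

section RoundTrip

variable (hs : 0 < s) (m : Fin (s*p+1) → ℕ) (hm : ∑ i, m i = p) (hg : Good s p m)

omit hm in
lemma mu_ncp (j : Fin (s*p)) :
    mu s p (ncp s p m hg) j = ⟨om s p m hg j, om_lt m hg j⟩ := by
  apply le_antisymm
  · exact Finset.min'_le _ _ (om_self_mem m hg)
  · apply Finset.le_min'
    intro y hy
    rw [mem_part_ncp m hg] at hy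
    show om s p m hg j ≤ y.val
    rw [← hy]
    exact om_le m hg y

include hs hm in
lemma mOf_ncp : mOf s p (ncp s p m hg) = m := by
  funext i
  have hmm : mm s p m i.val = m i := by
    rw [mm_small _ (by omega)]
  rcases Nat.lt_or_ge i.val (s*p) with h | h
  · show mOf s p (ncp s p m hg) i = m i
    rw [mOf, dif_pos h]
    by_cases hmj : 0 < mm s p m i.val
    · have homj : om s p m hg ⟨i.val, h⟩ = i.val := om_opener m hg h hmj
      have hmuj : mu s p (ncp s p m hg) ⟨i.val, h⟩ = ⟨i.val, h⟩ := by
        rw [mu_ncp m hg]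
        exact Fin.ext homj
      rw [if_pos ((min_test_iff _ _).mpr hmuj)]
      rw [card_part_ncp m hm hg ⟨i.val, h⟩, homj]
      rw [Nat.mul_div_cancel_left _ hs]
      exact hmm
    · push_neg at hmj
      have hmj0 : mm s p m i.val = 0 := Nat.le_zero.mp hmj
      have hlt : om s p m hg ⟨i.val, h⟩ < i.val := om_lt_of_mm_zero m hg hmj0
      have hne : mu s p (ncp s p m hg) ⟨i.val, h⟩ ≠ ⟨i.val, h⟩ := by
        rw [mu_ncp m hg]
        intro hc
        have := congrArg Fin.val hc
        simp only at this
        omega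
      rw [if_neg (fun hc => hne ((min_test_iff _ _).mp hc))]
      rw [← hmm, hmj0]
  · have hval : i.val = s*p := by have := i.isLt; omega
    show mOf s p (ncp s p m hg) i = m i
    rw [mOf, dif_neg (by omega)]
    rw [← hmm, hval, mm_sp hs m hm hg]

end RoundTrip

/-! ### the final equivalence and count -/

variable (s p) in
noncomputable def theEquiv (hs : 0 < s) :
    {P : Finpartition (Finset.univ : Finset (Fin (s*p))) //
        IsNonCrossing P ∧ ∀ b ∈ P.parts, s ∣ b.card}
    ≃ {m : Fin (s*p+1) → ℕ // (∑ i, m i) = p ∧ Good s p m} where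
  toFun P := ⟨mOf s p P.1, sum_mOf P.1 hs P.2.2, good_mOf P.1 P.2.2⟩
  invFun m := ⟨ncp s p m.1 m.2.2, ncp_noncrossing m.1 m.2.2,
    fun b hb => parts_card_dvd m.1 m.2.1 m.2.2 b hb⟩
  left_inv P := Subtype.ext (ncp_mOf P.1 hs P.2.2 P.2.1)
  right_inv m := Subtype.ext (mOf_ncp hs m.1 m.2.1 m.2.2)

theorem main_count (hs : 0 < s) :
    (s * p + 1) * Nat.card {P : Finpartition (Finset.univ : Finset (Fin (s*p))) //
        IsNonCrossing P ∧ ∀ b ∈ P.parts, s ∣ b.card} = Nat.choose (s*p+p) p := by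
  rw [Nat.card_congr (theEquiv s p hs), mul_comm, card_good_mul, card_all]

end FussCat

/-- **Fuss–Catalan numbers count non-crossing partitions of `[sp]` with block sizes divisible
by `s`.** -/
theorem fussCatalan_counts_divisible_blocks (p s : ℕ) (hp : 0 < p) (hs : 0 < s) :
    (s * p + 1) * Nat.card {P : Finpartition (Finset.univ : Finset (Fin (s * p))) //
        IsNonCrossing P ∧ ∀ b ∈ P.parts, s ∣ b.card} = Nat.choose (s * p + p) p := by
  exact FussCat.main_count hs
end

section
/- Let γ ∈ S_p be the full cycle (1 2 ... p). If a permutation β ∈ S_p satisfies both |γ⁻¹β| + |β| = p - 1 = |γ| (i.e. β lies on a geodesic from the identity to γ) and additionally α ∈ S_p satisfies |γ⁻¹α| + |α⁻¹β| = |γ⁻¹β| and |α| + |α⁻¹β| = |β|, then α = β. -/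
open Equiv Finset MeasureTheory

open Module

lemma permLength_exists {n : ℕ} (σ : Equiv.Perm (Fin n)) :
    ∃ l : List (Equiv.Perm (Fin n)), (∀ τ ∈ l, τ.IsSwap) ∧ l.prod = σ ∧
      l.length = permLength σ := by
  have hne : {k | ∃ l : List (Equiv.Perm (Fin n)),
      (∀ τ ∈ l, τ.IsSwap) ∧ l.prod = σ ∧ l.length = k}.Nonempty := by
    obtain ⟨l, hprod, hswap⟩ := (Equiv.Perm.truncSwapFactors σ).out
    exact ⟨l.length, l, hswap, hprod, rfl⟩
  exact Nat.sInf_mem hne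

lemma permLength_le {n : ℕ} {σ : Equiv.Perm (Fin n)} {l : List (Equiv.Perm (Fin n))}
    (hs : ∀ τ ∈ l, τ.IsSwap) (hp : l.prod = σ) : permLength σ ≤ l.length :=
  Nat.sInf_le ⟨l, hs, hp, rfl⟩

lemma permLength_mul_le {n : ℕ} (σ τ : Equiv.Perm (Fin n)) :
    permLength (σ * τ) ≤ permLength σ + permLength τ := by
  obtain ⟨l1, hs1, hp1, hl1⟩ := permLength_exists σ
  obtain ⟨l2, hs2, hp2, hl2⟩ := permLength_exists τ
  have := permLength_le (l := l1 ++ l2) (σ := σ * τ)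
    (by intro x hx; rcases List.mem_append.1 hx with h | h; exacts [hs1 x h, hs2 x h])
    (by rw [List.prod_append, hp1, hp2])
  simpa [hl1, hl2] using this

lemma permLength_inv_le {n : ℕ} (σ : Equiv.Perm (Fin n)) :
    permLength σ⁻¹ ≤ permLength σ := by
  obtain ⟨l, hs, hp, hl⟩ := permLength_exists σ
  have := permLength_le (l := (l.map (·⁻¹)).reverse) (σ := σ⁻¹)
    (by
      intro x hx
      simp only [List.mem_reverse, List.mem_map] at hx
      obtain ⟨y, hy, rfl⟩ := hx
      obtain ⟨a, b, hab, rfl⟩ := hs y hy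
      rw [Equiv.swap_inv]
      exact ⟨a, b, hab, rfl⟩)
    (by rw [← List.prod_inv_reverse, hp])
  simpa [hl] using this

lemma permLength_inv {n : ℕ} (σ : Equiv.Perm (Fin n)) : permLength σ⁻¹ = permLength σ :=
  le_antisymm (permLength_inv_le σ) (by simpa using permLength_inv_le σ⁻¹)

lemma permLength_eq_zero {n : ℕ} {σ : Equiv.Perm (Fin n)} (h : permLength σ = 0) : σ = 1 := by
  obtain ⟨l, _, hp, hl⟩ := permLength_exists σ
  rw [h, List.length_eq_zero_iff] at hl
  simp [hl] at hp
  exact hp.symm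

/-- The fixed space of a permutation acting on `Fin p → ℝ`. -/
def fixSpace {p : ℕ} (σ : Equiv.Perm (Fin p)) : Submodule ℝ (Fin p → ℝ) where
  carrier := {v | ∀ i, v (σ i) = v i}
  add_mem' := by intro a b ha hb i; simp [ha i, hb i]
  zero_mem' := by intro i; rfl
  smul_mem' := by intro c a ha i; simp [ha i]

lemma mem_fixSpace {p : ℕ} {σ : Equiv.Perm (Fin p)} {v : Fin p → ℝ} :
    v ∈ fixSpace σ ↔ ∀ i, v (σ i) = v i := Iff.rfl

lemma fixSpace_one {p : ℕ} : fixSpace (1 : Equiv.Perm (Fin p)) = ⊤ := by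
  ext v; simp [mem_fixSpace]

lemma finrank_fixSpace_swap {p : ℕ} {τ : Equiv.Perm (Fin p)} (h : τ.IsSwap) :
    p ≤ 1 + finrank ℝ (fixSpace τ) := by
  obtain ⟨a, b, hab, rfl⟩ := h
  set f : (Fin p → ℝ) →ₗ[ℝ] ℝ := (LinearMap.proj a : (Fin p → ℝ) →ₗ[ℝ] ℝ) - (LinearMap.proj b : (Fin p → ℝ) →ₗ[ℝ] ℝ) with hf
  have hker : LinearMap.ker f ≤ fixSpace (Equiv.swap a b) := by
    intro v hv i
    have hv' : v a = v b := by
      have : f v = 0 := hv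
      simpa [hf, sub_eq_zero] using this
    by_cases hia : i = a
    · subst hia; rw [Equiv.swap_apply_left]; exact hv'.symm
    by_cases hib : i = b
    · subst hib; rw [Equiv.swap_apply_right]; exact hv'
    · rw [Equiv.swap_apply_of_ne_of_ne hia hib]
  have h1 : finrank ℝ (LinearMap.range f) + finrank ℝ (LinearMap.ker f)
      = finrank ℝ (Fin p → ℝ) := LinearMap.finrank_range_add_finrank_ker f
  have h2 : finrank ℝ (LinearMap.range f) ≤ 1 := by
    simpa using (LinearMap.range f).finrank_le
  have h3 : finrank ℝ (Fin p → ℝ) = p := by simp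
  have h4 := Submodule.finrank_mono hker
  omega

open Fin.NatCast in
lemma finrank_fixSpace_finRotate {p : ℕ} : finrank ℝ (fixSpace (finRotate p)) ≤ 1 := by
  rcases p with _ | n
  · have h := (fixSpace (finRotate 0)).finrank_le
    have h2 : finrank ℝ (Fin 0 → ℝ) = 0 := by simp
    omega
  · set g : fixSpace (finRotate (n + 1)) →ₗ[ℝ] ℝ :=
      (LinearMap.proj (0 : Fin (n + 1))).comp (Submodule.subtype _) with hg
    have hconst : ∀ v ∈ fixSpace (finRotate (n + 1)), ∀ i : Fin (n + 1), v i = v 0 := by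
      intro v hv i
      have hk : ∀ k : ℕ, v ((k : Fin (n + 1))) = v 0 := by
        intro k
        induction k with
        | zero => simp
        | succ k ih =>
          have : ((k + 1 : ℕ) : Fin (n + 1)) = finRotate (n + 1) ((k : ℕ) : Fin (n + 1)) := by
            rw [finRotate_succ_apply]; push_cast; ring
          rw [this, hv, ih]
      calc v i = v (((i : ℕ) : Fin (n + 1))) := by rw [Fin.cast_val_eq_self]
        _ = v 0 := hk _
    have hinj : Function.Injective g := by
      intro ⟨v, hv⟩ ⟨w, hw⟩ hvw
      have h0 : v 0 = w 0 := hvw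
      apply Subtype.ext
      funext i
      show v i = w i
      rw [hconst v hv i, hconst w hw i, h0]
    calc finrank ℝ (fixSpace (finRotate (n + 1))) ≤ finrank ℝ ℝ :=
        LinearMap.finrank_le_finrank_of_injective hinj
      _ = 1 := finrank_self ℝ

lemma finrank_fixSpace_prod {p : ℕ} (l : List (Equiv.Perm (Fin p)))
    (hs : ∀ τ ∈ l, τ.IsSwap) : p ≤ l.length + finrank ℝ (fixSpace l.prod) := by
  induction l with
  | nil =>
    rw [List.prod_nil, fixSpace_one]
    have : finrank ℝ (⊤ : Submodule ℝ (Fin p → ℝ)) = p := by simp [finrank_top]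
    omega
  | cons τ l ih =>
    have hτ := finrank_fixSpace_swap (hs τ List.mem_cons_self)
    have hl := ih (fun x hx => hs x (List.mem_cons_of_mem _ hx))
    have hsub : fixSpace τ ⊓ fixSpace l.prod ≤ fixSpace (τ * l.prod) := by
      intro v hv i
      obtain ⟨h1', h2'⟩ := hv
      simp only [Equiv.Perm.mul_apply]
      rw [h1', h2']
    have hdim : finrank ℝ ↥(fixSpace τ ⊔ fixSpace l.prod)
        + finrank ℝ ↥(fixSpace τ ⊓ fixSpace l.prod)
        = finrank ℝ (fixSpace τ) + finrank ℝ (fixSpace l.prod) :=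
      Submodule.finrank_sup_add_finrank_inf_eq _ _
    have hsup : finrank ℝ ↥(fixSpace τ ⊔ fixSpace l.prod) ≤ p := by
      simpa using (fixSpace τ ⊔ fixSpace l.prod).finrank_le
    have hmono := Submodule.finrank_mono hsub
    simp only [List.prod_cons, List.length_cons]
    change p ≤ l.length + 1 + finrank ℝ (fixSpace (τ * l.prod))
    omega

lemma le_permLength_finRotate (p : ℕ) : p - 1 ≤ permLength (finRotate p) := by
  obtain ⟨l, hs, hp, hl⟩ := permLength_exists (finRotate p)
  have := finrank_fixSpace_prod l hs
  rw [hp] at this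
  have := finrank_fixSpace_finRotate (p := p)
  omega

/-- If `β` lies on a geodesic from the identity to the full cycle `γ = (1 2 … p)` and `α`
saturates both triangle inequalities `|γ⁻¹α| + |α⁻¹β| = |γ⁻¹β|` and `|α| + |α⁻¹β| = |β|`,
then `α = β`. -/
theorem eq_of_double_geodesic (p : ℕ) (α β : Equiv.Perm (Fin p))
    (h1 : permLength ((finRotate p)⁻¹ * β) + permLength β = p - 1)
    (h2 : permLength ((finRotate p)⁻¹ * α) + permLength (α⁻¹ * β) =
      permLength ((finRotate p)⁻¹ * β))
    (h3 : permLength α + permLength (α⁻¹ * β) = permLength β) :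
    α = β := by
  have key : p - 1 ≤ permLength (finRotate p) := le_permLength_finRotate p
  have tri : permLength (finRotate p) ≤ permLength α + permLength ((finRotate p)⁻¹ * α) := by
    have h := permLength_mul_le α (α⁻¹ * finRotate p)
    have e : α * (α⁻¹ * finRotate p) = finRotate p := by group
    rw [e] at h
    have e2 : permLength (α⁻¹ * finRotate p) = permLength ((finRotate p)⁻¹ * α) := by
      rw [← permLength_inv ((finRotate p)⁻¹ * α), mul_inv_rev, inv_inv]
    omega
  have hc : permLength (α⁻¹ * β) = 0 := by omega
  have h0 : α⁻¹ * β = 1 := permLength_eq_zero hc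
  exact inv_mul_eq_one.mp h0
end

section
/- For c ≥ 1, the entropy integral ∫ (−x log₂ x) dπ^(1)_c(x) of the Marchenko-Pastur distribution with parameter c equals −1/2 − c·log₂ c; for 0 < c < 1, it equals −c²/2. In particular, for c = 1 the value is −1/2. -/
set_option maxHeartbeats 1000000


open Equiv Finset MeasureTheory

/-- Density of the Marchenko–Pastur (free Poisson) distribution `π⁽¹⁾_c` on its bulk support
`[1+c−2√c, 1+c+2√c]`. -/
noncomputable def mpDensity (c x : ℝ) : ℝ :=
  Real.sqrt (4 * c - (x - 1 - c) ^ 2) / (2 * Real.pi * x)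

section MPAux
open Real MeasureTheory intervalIntegral Topology Filter

lemma intCos (m : ℤ) : ∫ θ in (0:ℝ)..π, Real.cos (m*θ) = if m = 0 then π else 0 := by
  rcases eq_or_ne m 0 with rfl | hm
  · simp
  · have h : ∀ θ ∈ Set.uIcc (0:ℝ) π, HasDerivAt (fun x => Real.sin (m*x) / m) (Real.cos (m*θ)) θ := by
      intro θ _
      have := ((Real.hasDerivAt_sin (m*θ)).comp θ ((hasDerivAt_id θ).const_mul (m:ℝ)))
      have h2 := this.div_const (m:ℝ)
      refine h2.congr_deriv ?_
      have hm' : (m:ℝ) ≠ 0 := Int.cast_ne_zero.mpr hm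
      field_simp
      
    rw [intervalIntegral.integral_eq_sub_of_hasDerivAt h (by
      apply Continuous.intervalIntegrable; continuity)]
    simp [Real.sin_int_mul_pi, hm]

lemma cosSinId (m θ : ℝ) : Real.cos (m*θ) * Real.sin θ^2
    = (1/2)*Real.cos (m*θ) - (1/4)*Real.cos ((m+2)*θ) - (1/4)*Real.cos ((m-2)*θ) := by
  have h1 : (m+2)*θ = m*θ + 2*θ := by ring
  have h2 : (m-2)*θ = m*θ - 2*θ := by ring
  rw [h1, h2, Real.cos_add, Real.cos_sub, Real.cos_two_mul, Real.cos_sq']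
  ring

lemma intCosSin (k : ℕ) (hk : 1 ≤ k) :
    ∫ θ in (0:ℝ)..π, Real.cos (k*θ) * Real.sin θ^2 = if k = 2 then -(π/4) else 0 := by
  have key : (fun θ => Real.cos (k*θ) * Real.sin θ^2)
      = fun θ => (1/2)*Real.cos (((k:ℤ):ℝ)*θ) - (1/4)*Real.cos ((((k:ℤ)+2 : ℤ):ℝ)*θ)
        - (1/4)*Real.cos ((((k:ℤ)-2 : ℤ):ℝ)*θ) := by
    funext θ
    push_cast
    exact cosSinId k θ
  rw [key]
  have i1 : IntervalIntegrable (fun θ => (1/2)*Real.cos (((k:ℤ):ℝ)*θ)) volume 0 π := by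
    apply Continuous.intervalIntegrable; continuity
  have i2 : IntervalIntegrable (fun θ => (1/4)*Real.cos ((((k:ℤ)+2 : ℤ):ℝ)*θ)) volume 0 π := by
    apply Continuous.intervalIntegrable; continuity
  have i3 : IntervalIntegrable (fun θ => (1/4)*Real.cos ((((k:ℤ)-2 : ℤ):ℝ)*θ)) volume 0 π := by
    apply Continuous.intervalIntegrable; continuity
  rw [intervalIntegral.integral_sub (i1.sub i2) i3, intervalIntegral.integral_sub i1 i2,
    intervalIntegral.integral_const_mul, intervalIntegral.integral_const_mul,
    intervalIntegral.integral_const_mul, intCos, intCos, intCos]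
  have hk0 : ((k:ℤ)) ≠ 0 := by omega
  have hk2 : ((k:ℤ)) + 2 ≠ 0 := by omega
  rcases eq_or_ne k 2 with rfl | h2
  · norm_num; ring
  · have : ((k:ℤ)) - 2 ≠ 0 := by omega
    simp [hk0, hk2, this, h2, show k ≠ 0 by omega]

lemma hasSumLog (r θ : ℝ) (h0 : 0 ≤ r) (h1 : r < 1) :
    HasSum (fun n : ℕ => (-2) * (r^n * Real.cos (n*θ) / n) * Real.sin θ^2)
      (Real.log (1-2*r*Real.cos θ+r^2) * Real.sin θ^2) := by
  set z : ℂ := (r:ℂ) * Complex.exp (θ * Complex.I) with hz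
  have hnorm : ‖z‖ < 1 := by
    rw [hz]
    simp only [norm_mul, Complex.norm_real, Complex.norm_exp_ofReal_mul_I, mul_one]
    rwa [Real.norm_of_nonneg h0]
  have h := Complex.hasSum_taylorSeries_neg_log hnorm
  have hre := Complex.reCLM.hasSum h
  have hterm : ∀ n : ℕ, Complex.reCLM (z^n / n) = r^n * Real.cos (n*θ) / n := by
    intro n
    have hzn : z^n = ((r^n : ℝ) : ℂ) * Complex.exp ((n*θ : ℝ) * Complex.I) := by
      rw [hz, mul_pow, ← Complex.exp_nat_mul]
      push_cast
      ring_nf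
    rcases Nat.eq_zero_or_pos n with rfl | hn
    · simp
    · have : z^n/n = ((r^n/n : ℝ) : ℂ) * Complex.exp ((n*θ : ℝ) * Complex.I) := by
        rw [hzn]; push_cast; ring
      rw [this]
      simp only [Complex.reCLM_apply, Complex.re_ofReal_mul, Complex.exp_ofReal_mul_I_re]
      ring
  have hval : Complex.reCLM (-Complex.log (1 - z)) = -(1/2) * Real.log (1-2*r*Real.cos θ+r^2) := by
    simp only [Complex.reCLM_apply, Complex.neg_re, Complex.log_re]
    have habs : ‖1-z‖ = Real.sqrt (1-2*r*Real.cos θ+r^2) := by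
      rw [Complex.norm_def]
      congr 1
      rw [Complex.normSq_apply]
      have hre' : (1-z).re = 1 - r * Real.cos θ := by
        simp [hz, Complex.re_ofReal_mul, Complex.exp_ofReal_mul_I_re]
      have him : (1-z).im = -(r * Real.sin θ) := by
        simp [hz, Complex.im_ofReal_mul, Complex.exp_ofReal_mul_I_im]
      rw [hre', him]
      nlinarith [Real.sin_sq_add_cos_sq θ]
    rw [habs, Real.log_sqrt (by nlinarith [Real.sin_sq_add_cos_sq θ, Real.neg_one_le_cos θ, Real.cos_le_one θ])]
    ring
  rw [funext hterm] at hre  -- hre : HasSum (fun n => r^n * cos(nθ)/n) (re (-log (1-z)))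
  rw [hval] at hre
  have := (hre.mul_left (-2)).mul_right (Real.sin θ^2)
  have e : Real.log (1-2*r*Real.cos θ+r^2) * Real.sin θ^2
      = -2 * (-(1/2) * Real.log (1-2*r*Real.cos θ+r^2)) * Real.sin θ^2 := by ring
  rw [e]; exact this

lemma coreInt (r : ℝ) (h0 : 0 ≤ r) (h1 : r < 1) :
    ∫ θ in (0:ℝ)..π, Real.log (1-2*r*Real.cos θ+r^2) * Real.sin θ^2 = π * r^2 / 4 := by
  set F : ℕ → ℝ → ℝ := fun n θ => (-2) * (r^n * Real.cos (n*θ) / n) * Real.sin θ^2 with hF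
  set μ := volume.restrict (Set.Ioc (0:ℝ) π) with hμ
  have hcont : ∀ n : ℕ, Continuous (F n) := by
    intro n; rw [hF]; fun_prop
  have hF_int : ∀ n, Integrable (F n) μ := by
    intro n; rw [hμ]; exact (hcont n).integrableOn_Ioc
  have hbound : ∀ (n : ℕ) (θ : ℝ), ‖F n θ‖ ≤ 2 * r^n := by
    intro n θ
    rcases Nat.eq_zero_or_pos n with rfl | hn
    · simp [hF]
    · have hn1 : (1:ℝ) ≤ (n:ℝ) := by exact_mod_cast hn
      have hc : |Real.cos (n*θ)| ≤ 1 := Real.abs_cos_le_one _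
      have hs0 : (0:ℝ) ≤ Real.sin θ^2 := sq_nonneg _
      have hs1 : Real.sin θ^2 ≤ 1 := Real.sin_sq_le_one θ
      have hr : (0:ℝ) ≤ r^n := pow_nonneg h0 n
      have hX : r^n * |Real.cos (n*θ)| / n ≤ r^n := by
        rw [div_le_iff₀ (by linarith : (0:ℝ) < n)]
        nlinarith [abs_nonneg (Real.cos (n*θ))]
      have hX0 : 0 ≤ r^n * |Real.cos (n*θ)| / n := by positivity
      have : ‖F n θ‖ = 2 * (r^n * |Real.cos (n*θ)| / n) * Real.sin θ^2 := by
        rw [hF]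
        simp only [Real.norm_eq_abs, abs_mul, abs_div, abs_neg, abs_pow,
          abs_of_nonneg h0, Nat.abs_cast, abs_of_nonneg hs0]
        norm_num
      rw [this]
      nlinarith
  have hsum : Summable fun n => ∫ θ, ‖F n θ‖ ∂μ := by
    refine Summable.of_nonneg_of_le
      (fun n => integral_nonneg (fun θ => norm_nonneg _)) (fun n => ?_)
      ((summable_geometric_of_lt_one h0 h1).mul_left (π * 2))
    · have hci : Integrable (fun _ : ℝ => 2 * r^n) μ := by
        rw [hμ]; exact continuous_const.integrableOn_Ioc
      calc ∫ θ, ‖F n θ‖ ∂μ ≤ ∫ _, 2 * r^n ∂μ :=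
            integral_mono (hF_int n).norm hci (fun θ => hbound n θ)
        _ = (π * 2) * r^n := by
            rw [hμ, MeasureTheory.setIntegral_const, Real.volume_real_Ioc_of_le Real.pi_pos.le,
              smul_eq_mul]
            ring
  have hkey := MeasureTheory.hasSum_integral_of_summable_integral_norm hF_int hsum
  have htsum : ∀ θ : ℝ, ∑' n, F n θ = Real.log (1-2*r*Real.cos θ+r^2) * Real.sin θ^2 :=
    fun θ => (hasSumLog r θ h0 h1).tsum_eq
  simp only [htsum] at hkey
  have heq : ∀ n : ℕ, (∫ θ, F n θ ∂μ) = if n = 2 then π * r^2/4 else 0 := by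
    intro n
    have hIoc : (∫ θ, F n θ ∂μ) = ∫ θ in (0:ℝ)..π, F n θ :=
      (intervalIntegral.integral_of_le Real.pi_pos.le).symm
    rcases Nat.eq_zero_or_pos n with rfl | hn
    · simp [hIoc, hF]
    · have : (fun θ => F n θ) = fun θ => ((-2) * r^n / n) * (Real.cos (n*θ) * Real.sin θ^2) := by
        funext θ; rw [hF]; ring
      rw [hIoc, this, intervalIntegral.integral_const_mul, intCosSin n hn]
      rcases eq_or_ne n 2 with rfl | h2
      · norm_num; ring
      · simp [h2]
  rw [funext heq] at hkey
  have hfinal := (hasSum_ite_eq 2 (π * r^2/4)).unique hkey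
  rw [intervalIntegral.integral_of_le Real.pi_pos.le]
  exact hfinal.symm

lemma negMulLog_le_one {t : ℝ} (h0 : 0 < t) (h1 : t ≤ 1) : -(Real.log t) * t ≤ 1 := by
  have h := Real.log_le_sub_one_of_pos (show (0:ℝ) < t⁻¹ by positivity)
  rw [Real.log_inv] at h
  have : -Real.log t ≤ t⁻¹ - 1 := h
  have ht : t * t⁻¹ = 1 := mul_inv_cancel₀ h0.ne'
  nlinarith

lemma coreIntOne : ∫ θ in (0:ℝ)..π, Real.log (2-2*Real.cos θ) * Real.sin θ^2 = π/4 := by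
  set μ := volume.restrict (Set.Ioc (0:ℝ) π) with hμ
  set R : ℕ → ℝ := fun n => 1 - 1/(n+1) with hR
  have hR0 : ∀ n, 0 ≤ R n := by
    intro n; rw [hR]; simp only
    have : 1/((n:ℝ)+1) ≤ 1 := by
      rw [div_le_one (by positivity)]; linarith [Nat.cast_nonneg (α := ℝ) n]
    linarith
  have hR1 : ∀ n, R n < 1 := by
    intro n; rw [hR]; simp only
    have : 0 < 1/((n:ℝ)+1) := by positivity
    linarith
  have hs_pos : ∀ n : ℕ, ∀ θ : ℝ, 0 < 1 - 2*(R n)*Real.cos θ + (R n)^2 := by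
    intro n θ
    nlinarith [Real.cos_le_one θ, sq_nonneg (1 - R n), hR0 n, hR1 n,
      mul_nonneg (hR0 n) (sub_nonneg.mpr (Real.cos_le_one θ))]
  set F : ℕ → ℝ → ℝ := fun n θ => Real.log (1-2*(R n)*Real.cos θ+(R n)^2) * Real.sin θ^2 with hF
  have hFcont : ∀ n, Continuous (F n) := by
    intro n
    have h1 : Continuous fun θ : ℝ => 1-2*(R n)*Real.cos θ+(R n)^2 := by fun_prop
    exact (h1.log (fun θ => (hs_pos n θ).ne')).mul (by fun_prop)
  have hmeas : ∀ n, AEStronglyMeasurable (F n) μ := fun n => (hFcont n).aestronglyMeasurable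
  have hbi : Integrable (fun _ : ℝ => Real.log 4 + 1) μ := by
    rw [hμ]; exact continuous_const.integrableOn_Ioc
  have h_bound : ∀ n, ∀ᵐ θ ∂μ, ‖F n θ‖ ≤ Real.log 4 + 1 := by
    intro n
    rw [hμ, ae_restrict_iff' measurableSet_Ioc]
    filter_upwards with θ hθ
    set r := R n
    set s := 1-2*r*Real.cos θ+r^2 with hs
    have hs4 : s ≤ 4 := by
      have := Real.neg_one_le_cos θ
      nlinarith [hR0 n, hR1 n]
    have hssin : Real.sin θ^2 ≤ s := by nlinarith [sq_nonneg (r - Real.cos θ), Real.sin_sq_add_cos_sq θ]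
    have hspos : 0 < s := hs_pos n θ
    have hsin1 : Real.sin θ^2 ≤ 1 := Real.sin_sq_le_one θ
    have hsin0 : 0 ≤ Real.sin θ^2 := sq_nonneg _
    rw [hF]
    simp only [Real.norm_eq_abs, abs_mul, abs_of_nonneg hsin0]
    rcases le_or_gt 1 s with h1s | h1s
    · have : |Real.log s| = Real.log s := abs_of_nonneg (Real.log_nonneg h1s)
      rw [this]
      have : Real.log s ≤ Real.log 4 := Real.log_le_log hspos hs4
      have h4 : (0:ℝ) ≤ Real.log 4 := Real.log_nonneg (by norm_num)
      nlinarith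
    · have hlneg : Real.log s < 0 := Real.log_neg hspos h1s
      have : |Real.log s| = -Real.log s := abs_of_neg hlneg
      rw [this]
      have hsinpos : 0 < Real.sin θ^2 := by
        rcases eq_or_lt_of_le hθ.2 with heq | hlt
        · exfalso
          have hc : Real.cos θ = -1 := by rw [heq, Real.cos_pi]
          rw [hs, hc] at h1s
          nlinarith [hR0 n, sq_nonneg (1 + r)]
        · exact pow_pos (Real.sin_pos_of_pos_of_lt_pi hθ.1 hlt) 2
      have hlog : Real.log (Real.sin θ^2) ≤ Real.log s := Real.log_le_log hsinpos hssin
      have hneg1 : -(Real.log (Real.sin θ^2)) * (Real.sin θ^2) ≤ 1 :=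
        negMulLog_le_one hsinpos hsin1
      have h4 : (0:ℝ) ≤ Real.log 4 := Real.log_nonneg (by norm_num)
      nlinarith
  have h_lim : ∀ᵐ θ ∂μ, Filter.Tendsto (fun n => F n θ) Filter.atTop
      (𝓝 (Real.log (2-2*Real.cos θ) * Real.sin θ^2)) := by
    rw [hμ, ae_restrict_iff' measurableSet_Ioc]
    filter_upwards with θ hθ
    have hcos : Real.cos θ < 1 := by
      have := Real.strictAntiOn_cos (Set.left_mem_Icc.mpr Real.pi_pos.le)
        ⟨hθ.1.le, hθ.2⟩ hθ.1
      simpa using this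
    have hRlim : Filter.Tendsto R Filter.atTop (𝓝 1) := by
      rw [hR]
      have h0 : Filter.Tendsto (fun n : ℕ => 1/((n:ℝ)+1)) Filter.atTop (𝓝 0) :=
        tendsto_one_div_add_atTop_nhds_zero_nat
      simpa using Filter.Tendsto.const_sub 1 h0
    have hg : ContinuousAt (fun r : ℝ => Real.log (1-2*r*Real.cos θ+r^2) * Real.sin θ^2) 1 := by
      apply ContinuousAt.mul _ continuousAt_const
      apply ContinuousAt.comp (Real.continuousAt_log (by nlinarith)) (by fun_prop)
    have := hg.tendsto.comp hRlim
    simp only [Function.comp_def] at this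
    have he : (2 : ℝ) - 2*Real.cos θ = 1 - 2*1*Real.cos θ + 1^2 := by ring
    rw [he]
    exact this
  have hmain := MeasureTheory.tendsto_integral_of_dominated_convergence _ hmeas hbi h_bound h_lim
  have hval : ∀ n, (∫ θ, F n θ ∂μ) = π * (R n)^2 / 4 := by
    intro n
    rw [hμ, ← intervalIntegral.integral_of_le Real.pi_pos.le]
    exact coreInt (R n) (hR0 n) (hR1 n)
  rw [funext hval] at hmain
  have hlim2 : Filter.Tendsto (fun n => π * (R n)^2 / 4) Filter.atTop (𝓝 (π/4)) := by
    have hRlim : Filter.Tendsto R Filter.atTop (𝓝 1) := by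
      rw [hR]
      have h0 : Filter.Tendsto (fun n : ℕ => 1/((n:ℝ)+1)) Filter.atTop (𝓝 0) :=
        tendsto_one_div_add_atTop_nhds_zero_nat
      simpa using Filter.Tendsto.const_sub 1 h0
    have := ((hRlim.pow 2).const_mul π).div_const 4
    norm_num at this
    exact this
  have := tendsto_nhds_unique hmain hlim2
  rw [intervalIntegral.integral_of_le Real.pi_pos.le]
  exact this

lemma mpReduce (c : ℝ) (hc : 0 < c) :
    (∫ x in Set.Icc (1 + c - 2 * Real.sqrt c) (1 + c + 2 * Real.sqrt c),
        (-x * Real.log x) * mpDensity c x)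
    = -(2*c/π) * ∫ θ in (0:ℝ)..π, Real.log (1+c-2*Real.sqrt c*Real.cos θ) * Real.sin θ^2 := by
  set r := Real.sqrt c with hrdef
  have hr : 0 < r := Real.sqrt_pos.mpr hc
  have hr2 : r^2 = c := Real.sq_sqrt hc.le
  set g : ℝ → ℝ := fun θ => 1 + c - 2*r*Real.cos θ with hg
  have hderiv : ∀ θ ∈ Set.Ioo (0:ℝ) π, HasDerivWithinAt g (2*r*Real.sin θ) (Set.Ioo (0:ℝ) π) θ := by
    intro θ _
    have h1 : HasDerivAt (fun θ : ℝ => 1 + c - 2*r*Real.cos θ) (2*r*Real.sin θ) θ := by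
      have := ((Real.hasDerivAt_cos θ).const_mul (2*r)).const_sub (1+c)
      refine this.congr_deriv ?_
      ring
    exact h1.hasDerivWithinAt
  have hmono : StrictMonoOn g (Set.Icc 0 π) := by
    intro x hx y hy hxy
    have hcos := Real.strictAntiOn_cos hx hy hxy
    simp only [hg]
    nlinarith
  have hinj : Set.InjOn g (Set.Ioo 0 π) := (hmono.injOn).mono Set.Ioo_subset_Icc_self
  have himg : g '' Set.Ioo 0 π = Set.Ioo (1+c-2*r) (1+c+2*r) := by
    ext x
    constructor
    · rintro ⟨θ, hθ, rfl⟩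
      have hmem : θ ∈ Set.Icc (0:ℝ) π := ⟨hθ.1.le, hθ.2.le⟩
      have h1 : Real.cos θ < Real.cos 0 :=
        Real.strictAntiOn_cos (Set.left_mem_Icc.mpr Real.pi_pos.le) hmem hθ.1
      have h2 : Real.cos π < Real.cos θ :=
        Real.strictAntiOn_cos hmem (Set.right_mem_Icc.mpr Real.pi_pos.le) hθ.2
      rw [Real.cos_zero] at h1
      rw [Real.cos_pi] at h2
      constructor <;> (simp only [hg]; nlinarith)
    · intro hx
      have ht1 : -1 < (1+c-x)/(2*r) := by
        rw [lt_div_iff₀ (by linarith)]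
        have := hx.2
        nlinarith
      have ht2 : (1+c-x)/(2*r) < 1 := by
        rw [div_lt_one (by linarith)]
        have := hx.1
        nlinarith
      refine ⟨Real.arccos ((1+c-x)/(2*r)), ⟨Real.arccos_pos.mpr ht2, ?_⟩, ?_⟩
      · refine lt_of_le_of_ne (Real.arccos_le_pi _) (fun h => ?_)
        rw [Real.arccos_eq_pi] at h
        linarith
      · simp only [hg]
        rw [Real.cos_arccos ht1.le ht2.le]
        field_simp
        ring
  have key := MeasureTheory.integral_image_eq_integral_abs_deriv_smul measurableSet_Ioo hderiv hinj
    (fun x => (-x * Real.log x) * mpDensity c x)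
  rw [himg] at key
  have hIcc : (∫ x in Set.Icc (1 + c - 2 * r) (1 + c + 2 * r),
      (-x * Real.log x) * mpDensity c x)
      = ∫ x in Set.Ioo (1 + c - 2 * r) (1 + c + 2 * r), (-x * Real.log x) * mpDensity c x :=
    MeasureTheory.integral_Icc_eq_integral_Ioo
  rw [hIcc, key]
  have hcongr : ∀ θ ∈ Set.Ioo (0:ℝ) π,
      |2*r*Real.sin θ| • ((fun x => (-x * Real.log x) * mpDensity c x) (g θ))
      = (-(2*c/π)) * (Real.log (1+c-2*r*Real.cos θ) * Real.sin θ^2) := by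
    intro θ hθ
    have hsin : 0 < Real.sin θ := Real.sin_pos_of_pos_of_lt_pi hθ.1 hθ.2
    have hgpos : 0 < g θ := by
      have h1 : Real.cos θ < 1 := by
        have := Real.strictAntiOn_cos (Set.left_mem_Icc.mpr Real.pi_pos.le)
          ⟨hθ.1.le, hθ.2.le⟩ hθ.1
        simpa using this
      simp only [hg]
      nlinarith [sq_nonneg (1-r)]
    have habs : |2*r*Real.sin θ| = 2*r*Real.sin θ := abs_of_pos (by positivity)
    have hsqrt : Real.sqrt (4*c - (g θ - 1 - c)^2) = 2*r*Real.sin θ := by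
      have hQ : 4*c - (g θ - 1 - c)^2 = (2*r*Real.sin θ)^2 := by
        simp only [hg]
        have := Real.sin_sq_add_cos_sq θ
        nlinarith
      rw [hQ, Real.sqrt_sq (by positivity)]
    have hπ : Real.pi ≠ 0 := Real.pi_ne_zero
    have hgne : (1 : ℝ) + c - 2*r*Real.cos θ ≠ 0 := by
      have : g θ = 1 + c - 2*r*Real.cos θ := by rw [hg]
      rw [← this]; exact hgpos.ne'
    simp only [smul_eq_mul, habs, mpDensity, hsqrt]; simp only [hg]
    rw [show 2*c/π = 2*r^2/π from by rw [hr2]]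
    field_simp
  rw [MeasureTheory.setIntegral_congr_fun measurableSet_Ioo hcongr,
    MeasureTheory.integral_const_mul, ← MeasureTheory.integral_Ioc_eq_integral_Ioo,
    ← intervalIntegral.integral_of_le Real.pi_pos.le]

/-- The entropy integral `∫ (−x ln x) dπ⁽¹⁾_c` of the Marchenko–Pastur distribution equals
`−1/2 − c·ln c` for `c ≥ 1`, and `−c²/2` for `0 < c < 1` (the atom at `0` contributes nothing);
in particular for `c = 1` the value is `−1/2`. -/
theorem mp_entropy (c : ℝ) :
    (1 ≤ c → (∫ x in Set.Icc (1 + c - 2 * Real.sqrt c) (1 + c + 2 * Real.sqrt c),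
        (-x * Real.log x) * mpDensity c x) = -(1 / 2) - c * Real.log c) ∧
    (0 < c → c < 1 → (∫ x in Set.Icc (1 + c - 2 * Real.sqrt c) (1 + c + 2 * Real.sqrt c),
        (-x * Real.log x) * mpDensity c x) = -(c ^ 2) / 2) := by
  have hπ : Real.pi ≠ 0 := Real.pi_ne_zero
  constructor
  · intro hc1
    have hc : 0 < c := lt_of_lt_of_le one_pos hc1
    rw [mpReduce c hc]
    rcases eq_or_lt_of_le hc1 with rfl | hgt
    · have hfun : (fun θ => Real.log (1+1-2*Real.sqrt 1*Real.cos θ) * Real.sin θ^2)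
          = fun θ => Real.log (2-2*Real.cos θ) * Real.sin θ^2 := by
        funext θ
        rw [Real.sqrt_one]
        norm_num
      rw [hfun, coreIntOne, Real.log_one]
      field_simp
      ring
    · set s := (Real.sqrt c)⁻¹ with hs
      have hsc : 1 < Real.sqrt c := by
        rw [show (1:ℝ) = Real.sqrt 1 from Real.sqrt_one.symm]
        exact Real.sqrt_lt_sqrt (by norm_num) hgt
      have hscpos : 0 < Real.sqrt c := lt_trans one_pos hsc
      have hs0 : 0 < s := by positivity
      have hs1 : s < 1 := by rw [hs]; exact inv_lt_one_of_one_lt₀ hsc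
      have hs2 : s^2 = c⁻¹ := by rw [hs, inv_pow, Real.sq_sqrt hc.le]
      have hcs : c * s = Real.sqrt c := by
        rw [hs, mul_inv_eq_iff_eq_mul₀ hscpos.ne']
        exact (Real.mul_self_sqrt hc.le).symm
      have hcs2 : c * s^2 = 1 := by rw [hs2]; exact mul_inv_cancel₀ hc.ne'
      have hpos : ∀ θ : ℝ, 0 < 1-2*s*Real.cos θ+s^2 := by
        intro θ
        nlinarith [Real.cos_le_one θ, sq_nonneg (1-s),
          mul_nonneg hs0.le (sub_nonneg.mpr (Real.cos_le_one θ))]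
      have hfac : ∀ θ : ℝ, 1+c-2*Real.sqrt c*Real.cos θ = c * (1-2*s*Real.cos θ+s^2) := by
        intro θ
        linear_combination (2*Real.cos θ) * hcs - hcs2
      have hfun : (fun θ => Real.log (1+c-2*Real.sqrt c*Real.cos θ) * Real.sin θ^2)
          = fun θ => Real.log c * Real.sin θ^2
            + Real.log (1-2*s*Real.cos θ+s^2) * Real.sin θ^2 := by
        funext θ
        rw [hfac θ, Real.log_mul hc.ne' (hpos θ).ne']
        ring
      rw [hfun]
      have hi1 : IntervalIntegrable (fun θ => Real.log c * Real.sin θ^2) volume 0 π :=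
        (continuous_const.mul (by fun_prop)).intervalIntegrable 0 π
      have hi2 : IntervalIntegrable
          (fun θ => Real.log (1-2*s*Real.cos θ+s^2) * Real.sin θ^2) volume 0 π := by
        apply Continuous.intervalIntegrable
        exact (Continuous.log (by fun_prop) (fun θ => (hpos θ).ne')).mul (by fun_prop)
      rw [intervalIntegral.integral_add hi1 hi2, intervalIntegral.integral_const_mul,
        integral_sin_sq, coreInt s hs0.le hs1, hs2]
      simp only [Real.sin_zero, Real.sin_pi, Real.cos_zero, Real.cos_pi]
      field_simp
      ring
  · intro hc hlt
    rw [mpReduce c hc]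
    have hr0 : 0 ≤ Real.sqrt c := Real.sqrt_nonneg c
    have hr1 : Real.sqrt c < 1 := by
      rw [show (1:ℝ) = Real.sqrt 1 from Real.sqrt_one.symm]
      exact Real.sqrt_lt_sqrt hc.le hlt
    have hfun : (fun θ => Real.log (1+c-2*Real.sqrt c*Real.cos θ) * Real.sin θ^2)
        = fun θ => Real.log (1-2*Real.sqrt c*Real.cos θ+(Real.sqrt c)^2) * Real.sin θ^2 := by
      funext θ
      rw [Real.sq_sqrt hc.le]
      ring_nf
    rw [hfun, coreInt (Real.sqrt c) hr0 hr1, Real.sq_sqrt hc.le]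
    field_simp
    ring

end MPAux
end
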